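/- arXiv:2406.05252 — 5 statements merged into one kernel-verified Lean document; each statement's English description precedes it below -/
import Mathlib

section
/- Let p ≥ 1 be an integer, τ_s > 0, and let F : ℝ → ℝ be measurable, even, integrable on ℝ, with 0 ≤ F(t) ≤ F(0) = 1 for all t. Define F_p(T) = T^{−p} ∫_{[0,T]^p} ∑_{π ∈ S_p} ∏_{j=1}^{p} F((t_j − t_{π(j)})/τ_s)² dt₁…dt_p, where the sum runs over all permutations π of {1,…,p}. Then F_p(T) → 1 as T → ∞; i.e., the identity permutation contributes exactly 1 and every term corresponding to a non-identity permutation tends to 0. -/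
open MeasureTheory Filter

private lemma pi_restrict_Icc (n : ℕ) (T : ℝ) :
    (volume : Measure (Fin n → ℝ)).restrict (Set.Icc 0 fun _ => T)
      = Measure.pi fun _ : Fin n => (volume : Measure ℝ).restrict (Set.Icc 0 T) := by
  have h : Set.Icc (0 : Fin n → ℝ) (fun _ => T)
      = Set.pi Set.univ fun _ : Fin n => Set.Icc (0 : ℝ) T := by
    ext t
    simp [Set.mem_Icc, Pi.le_def, forall_and]
  rw [h]
  refine (Measure.pi_eq (μ := fun _ : Fin n => (volume : Measure ℝ).restrict (Set.Icc 0 T))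
    fun s hs => ?_).symm
  rw [Measure.restrict_apply (MeasurableSet.univ_pi hs), ← Set.pi_inter_distrib,
    volume_pi, Measure.pi_pi]
  exact Finset.prod_congr rfl fun i _ => (Measure.restrict_apply (hs i)).symm

private lemma integrableOn_Icc_of_le_one {p : ℕ} {f : (Fin p → ℝ) → ℝ}
    (hf : Measurable f) (h0 : ∀ t, 0 ≤ f t) (h1 : ∀ t, f t ≤ 1) (a b : Fin p → ℝ) :
    IntegrableOn f (Set.Icc a b) := by
  have hfin : volume (Set.Icc a b) < ⊤ := isCompact_Icc.measure_lt_top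
  refine Integrable.mono' ((integrableOn_const_iff (C := (1:ℝ))).2 (Or.inr hfin)) hf.aestronglyMeasurable
    (ae_of_all _ fun t => ?_)
  rw [Real.norm_eq_abs, abs_of_nonneg (h0 t)]
  exact h1 t

private lemma key_bound (n : ℕ) {τs : ℝ} (hτ : 0 < τs) (G : ℝ → ℝ) (hGm : Measurable G)
    (hG0 : ∀ t, 0 ≤ G t) (hG1 : ∀ t, G t ≤ 1) (hGint : Integrable G)
    (j₀ k₀ : Fin (n + 1)) (hjk : k₀ ≠ j₀) {T : ℝ} (hT : 0 < T) :
    ∫ t in Set.Icc (0 : Fin (n + 1) → ℝ) (fun _ => T), G ((t j₀ - t k₀) / τs)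
      ≤ (τs * ∫ x, G x) * T ^ n := by
  obtain ⟨m, rfl⟩ := Fin.exists_succAbove_eq hjk
  haveI : IsFiniteMeasure ((volume : Measure ℝ).restrict (Set.Icc 0 T)) :=
    ⟨by rw [Measure.restrict_apply_univ, Real.volume_Icc]; exact ENNReal.ofReal_lt_top⟩
  haveI : IsFiniteMeasure
      (Measure.pi fun _ : Fin n => (volume : Measure ℝ).restrict (Set.Icc 0 T)) := by
    constructor
    rw [Measure.pi_univ]
    exact ENNReal.prod_lt_top fun _ _ => measure_lt_top _ _
  have hpres := measurePreserving_piFinSuccAbove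
    (fun _ : Fin (n + 1) => (volume : Measure ℝ).restrict (Set.Icc 0 T)) j₀
  have hHm : Measurable fun z : ℝ × (Fin n → ℝ) => G ((z.1 - z.2 m) / τs) :=
    hGm.comp (by fun_prop)
  have hHint : Integrable (fun z : ℝ × (Fin n → ℝ) => G ((z.1 - z.2 m) / τs))
      (((volume : Measure ℝ).restrict (Set.Icc 0 T)).prod
        (Measure.pi fun _ : Fin n => (volume : Measure ℝ).restrict (Set.Icc 0 T))) := by
    refine (integrable_const (1 : ℝ)).mono' hHm.aestronglyMeasurable (ae_of_all _ fun z => ?_)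
    rw [Real.norm_eq_abs, abs_of_nonneg (hG0 _)]
    exact hG1 _
  have hinner : ∀ y : Fin n → ℝ,
      (∫ x in Set.Icc (0 : ℝ) T, G ((x - y m) / τs)) ≤ τs * ∫ x, G x := by
    intro y
    have hgi : Integrable fun x : ℝ => G ((x - y m) / τs) :=
      (hGint.comp_div hτ.ne').comp_sub_right (y m)
    calc (∫ x in Set.Icc (0 : ℝ) T, G ((x - y m) / τs))
        ≤ ∫ x, G ((x - y m) / τs) :=
          setIntegral_le_integral hgi (ae_of_all _ fun x => hG0 _)
      _ = ∫ x, G (x / τs) := integral_sub_right_eq_self (fun u => G (u / τs)) (y m)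
      _ = |τs| • ∫ x, G x := Measure.integral_comp_div G τs
      _ = τs * ∫ x, G x := by rw [abs_of_pos hτ, smul_eq_mul]
  calc ∫ t in Set.Icc (0 : Fin (n + 1) → ℝ) (fun _ => T), G ((t j₀ - t (j₀.succAbove m)) / τs)
      = ∫ t, G ((t j₀ - t (j₀.succAbove m)) / τs)
          ∂(Measure.pi fun _ : Fin (n + 1) => (volume : Measure ℝ).restrict (Set.Icc 0 T)) := by
        rw [pi_restrict_Icc]
    _ = ∫ z, G ((z.1 - z.2 m) / τs)
          ∂(((volume : Measure ℝ).restrict (Set.Icc 0 T)).prod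
            (Measure.pi fun _ : Fin n => (volume : Measure ℝ).restrict (Set.Icc 0 T))) :=
        hpres.integral_comp' fun z : ℝ × (Fin n → ℝ) => G ((z.1 - z.2 m) / τs)
    _ = ∫ y, (∫ x in Set.Icc (0 : ℝ) T, G ((x - y m) / τs))
          ∂(Measure.pi fun _ : Fin n => (volume : Measure ℝ).restrict (Set.Icc 0 T)) :=
        integral_prod_symm _ hHint
    _ ≤ ∫ _, (τs * ∫ x, G x)
          ∂(Measure.pi fun _ : Fin n => (volume : Measure ℝ).restrict (Set.Icc 0 T)) :=
        integral_mono_of_nonneg (ae_of_all _ fun y => integral_nonneg fun x => hG0 _)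
          (integrable_const _) (ae_of_all _ hinner)
    _ = (τs * ∫ x, G x) * T ^ n := by
        have hu : (Measure.pi fun _ : Fin n => (volume : Measure ℝ).restrict (Set.Icc 0 T))
            Set.univ = (ENNReal.ofReal T) ^ n := by
          simp [Measure.pi_univ, Real.volume_Icc]
        rw [integral_const, smul_eq_mul, measureReal_def, hu, ENNReal.toReal_pow,
          ENNReal.toReal_ofReal hT.le, mul_comm]

/-- The time-averaging factor `F_p(T)` tends to `1` as the averaging time `T → ∞`:
the identity permutation contributes exactly `1` for every `T > 0`, and every term
corresponding to a non-identity permutation tends to `0`. -/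
theorem Fp_tendsto_one_at_top (p : ℕ) (hp : 1 ≤ p) (τs : ℝ) (hτ : 0 < τs)
    (F : ℝ → ℝ) (hFmeas : Measurable F) (hFeven : ∀ t : ℝ, F (-t) = F t)
    (hFint : Integrable F)
    (hFnonneg : ∀ t : ℝ, 0 ≤ F t) (hFle : ∀ t : ℝ, F t ≤ F 0) (hF0 : F 0 = 1) :
    Tendsto (fun T : ℝ =>
        (1 / T ^ p) * ∫ t in Set.Icc (0 : Fin p → ℝ) (fun _ => T),
          ∑ π : Equiv.Perm (Fin p), ∏ j, (F ((t j - t (π j)) / τs)) ^ 2)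
      atTop (nhds 1)
    ∧ (∀ T : ℝ, 0 < T →
        (1 / T ^ p) * ∫ t in Set.Icc (0 : Fin p → ℝ) (fun _ => T),
          ∏ j, (F ((t j - t ((1 : Equiv.Perm (Fin p)) j)) / τs)) ^ 2 = 1)
    ∧ ∀ π : Equiv.Perm (Fin p), π ≠ 1 →
        Tendsto (fun T : ℝ =>
          (1 / T ^ p) * ∫ t in Set.Icc (0 : Fin p → ℝ) (fun _ => T),
            ∏ j, (F ((t j - t (π j)) / τs)) ^ 2) atTop (nhds 0) := by
  have hF1 : ∀ t, F t ≤ 1 := fun t => hF0 ▸ hFle t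
  have hGm : Measurable fun x : ℝ => (F x) ^ 2 := hFmeas.pow_const 2
  have hG0 : ∀ t : ℝ, 0 ≤ (F t) ^ 2 := fun t => sq_nonneg _
  have hG1 : ∀ t : ℝ, (F t) ^ 2 ≤ 1 := fun t => pow_le_one₀ (hFnonneg t) (hF1 t)
  have hGint : Integrable fun x : ℝ => (F x) ^ 2 := by
    refine hFint.mono' hGm.aestronglyMeasurable (ae_of_all _ fun t => ?_)
    rw [Real.norm_eq_abs, abs_of_nonneg (hG0 t), pow_two]
    exact mul_le_of_le_one_left (hFnonneg t) (hF1 t)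
  have hmeasπ : ∀ π : Equiv.Perm (Fin p), Measurable fun t : Fin p → ℝ =>
      ∏ j, (F ((t j - t (π j)) / τs)) ^ 2 := fun π =>
    Finset.measurable_prod _ fun j _ =>
      (hFmeas.comp
        (by fun_prop : Measurable fun t : Fin p → ℝ => (t j - t (π j)) / τs)).pow_const 2
  have h0π : ∀ (π : Equiv.Perm (Fin p)) (t : Fin p → ℝ),
      0 ≤ ∏ j, (F ((t j - t (π j)) / τs)) ^ 2 := fun π t =>
    Finset.prod_nonneg fun j _ => sq_nonneg _
  have hle1π : ∀ (π : Equiv.Perm (Fin p)) (t : Fin p → ℝ),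
      (∏ j, (F ((t j - t (π j)) / τs)) ^ 2) ≤ 1 := fun π t =>
    Finset.prod_le_one (fun j _ => sq_nonneg _) (fun j _ => hG1 _)
  have hintπ : ∀ (π : Equiv.Perm (Fin p)) (T : ℝ),
      IntegrableOn (fun t : Fin p → ℝ => ∏ j, (F ((t j - t (π j)) / τs)) ^ 2)
        (Set.Icc 0 fun _ => T) := fun π T =>
    integrableOn_Icc_of_le_one (hmeasπ π) (h0π π) (hle1π π) _ _
  have part2 : ∀ T : ℝ, 0 < T →
      (1 / T ^ p) * ∫ t in Set.Icc (0 : Fin p → ℝ) (fun _ => T),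
        ∏ j, (F ((t j - t ((1 : Equiv.Perm (Fin p)) j)) / τs)) ^ 2 = 1 := by
    intro T hT
    simp only [Equiv.Perm.coe_one, id_eq, sub_self, zero_div, hF0, one_pow,
      Finset.prod_const_one]
    have hab : (0 : Fin p → ℝ) ≤ fun _ => T := fun i => hT.le
    rw [setIntegral_const, smul_eq_mul, mul_one, measureReal_def, Real.volume_Icc_pi_toReal hab]
    simp only [Pi.zero_apply, sub_zero, Finset.prod_const, Finset.card_univ, Fintype.card_fin]
    rw [one_div_mul_cancel (pow_ne_zero _ hT.ne')]
  have part3 : ∀ π : Equiv.Perm (Fin p), π ≠ 1 →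
      Tendsto (fun T : ℝ =>
        (1 / T ^ p) * ∫ t in Set.Icc (0 : Fin p → ℝ) (fun _ => T),
          ∏ j, (F ((t j - t (π j)) / τs)) ^ 2) atTop (nhds 0) := by
    intro π hπ
    obtain ⟨j₀, hj₀⟩ : ∃ j, π j ≠ j := by
      by_contra h
      push_neg at h
      exact hπ (Equiv.ext h)
    obtain ⟨n, rfl⟩ : ∃ n, p = n + 1 := ⟨p - 1, (Nat.succ_pred_eq_of_pos hp).symm⟩
    have hC0 : 0 ≤ τs * ∫ x, (F x) ^ 2 :=
      mul_nonneg hτ.le (integral_nonneg fun x => sq_nonneg _)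
    have hlb : ∀ᶠ T : ℝ in atTop, (0 : ℝ) ≤
        (1 / T ^ (n + 1)) * ∫ t in Set.Icc (0 : Fin (n + 1) → ℝ) (fun _ => T),
          ∏ j, (F ((t j - t (π j)) / τs)) ^ 2 := by
      filter_upwards [eventually_gt_atTop (0 : ℝ)] with T hT
      exact mul_nonneg (by positivity) (integral_nonneg fun t => h0π π t)
    have hub : ∀ᶠ T : ℝ in atTop,
        (1 / T ^ (n + 1)) * (∫ t in Set.Icc (0 : Fin (n + 1) → ℝ) (fun _ => T),
          ∏ j, (F ((t j - t (π j)) / τs)) ^ 2) ≤ (τs * ∫ x, (F x) ^ 2) / T := by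
      filter_upwards [eventually_gt_atTop (0 : ℝ)] with T hT
      have hsingle : IntegrableOn
          (fun t : Fin (n + 1) → ℝ => (F ((t j₀ - t (π j₀)) / τs)) ^ 2)
          (Set.Icc 0 fun _ => T) :=
        integrableOn_Icc_of_le_one
          ((hFmeas.comp
            (by fun_prop : Measurable fun t : Fin (n + 1) → ℝ => (t j₀ - t (π j₀)) / τs)).pow_const 2)
          (fun t => sq_nonneg _) (fun t => hG1 _) _ _
      have hbound : (∫ t in Set.Icc (0 : Fin (n + 1) → ℝ) (fun _ => T),
          ∏ j, (F ((t j - t (π j)) / τs)) ^ 2)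
            ≤ ∫ t in Set.Icc (0 : Fin (n + 1) → ℝ) (fun _ => T),
                (F ((t j₀ - t (π j₀)) / τs)) ^ 2 := by
        refine integral_mono_of_nonneg (ae_of_all _ fun t => h0π π t) hsingle
          (ae_of_all _ fun t => ?_)
        calc ∏ j, (F ((t j - t (π j)) / τs)) ^ 2
            = (F ((t j₀ - t (π j₀)) / τs)) ^ 2 *
                ∏ j ∈ Finset.univ.erase j₀, (F ((t j - t (π j)) / τs)) ^ 2 :=
              (Finset.mul_prod_erase _ _ (Finset.mem_univ j₀)).symm
          _ ≤ (F ((t j₀ - t (π j₀)) / τs)) ^ 2 * 1 :=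
              mul_le_mul_of_nonneg_left
                (Finset.prod_le_one (fun j _ => sq_nonneg _) (fun j _ => hG1 _)) (sq_nonneg _)
          _ = (F ((t j₀ - t (π j₀)) / τs)) ^ 2 := mul_one _
      have hkey := key_bound n hτ (fun x => (F x) ^ 2) hGm hG0 hG1 hGint j₀ (π j₀) hj₀ hT
      calc (1 / T ^ (n + 1)) * (∫ t in Set.Icc (0 : Fin (n + 1) → ℝ) (fun _ => T),
            ∏ j, (F ((t j - t (π j)) / τs)) ^ 2)
          ≤ (1 / T ^ (n + 1)) * ((τs * ∫ x, (F x) ^ 2) * T ^ n) :=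
            mul_le_mul_of_nonneg_left (hbound.trans hkey) (by positivity)
        _ = (τs * ∫ x, (F x) ^ 2) / T := by
            rw [pow_succ]
            field_simp
    have hCdiv : Tendsto (fun T : ℝ => (τs * ∫ x, (F x) ^ 2) / T) atTop (nhds 0) :=
      tendsto_const_nhds.div_atTop tendsto_id
    exact tendsto_of_tendsto_of_tendsto_of_le_of_le' tendsto_const_nhds hCdiv hlb hub
  have hsum : ∀ T : ℝ, (1 / T ^ p) * (∫ t in Set.Icc (0 : Fin p → ℝ) (fun _ => T),
      ∑ π : Equiv.Perm (Fin p), ∏ j, (F ((t j - t (π j)) / τs)) ^ 2)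
        = ∑ π : Equiv.Perm (Fin p), (1 / T ^ p) *
            ∫ t in Set.Icc (0 : Fin p → ℝ) (fun _ => T),
              ∏ j, (F ((t j - t (π j)) / τs)) ^ 2 := by
    intro T
    rw [integral_finset_sum _ fun π _ => hintπ π T, Finset.mul_sum]
  have part1 : Tendsto (fun T : ℝ =>
      (1 / T ^ p) * ∫ t in Set.Icc (0 : Fin p → ℝ) (fun _ => T),
        ∑ π : Equiv.Perm (Fin p), ∏ j, (F ((t j - t (π j)) / τs)) ^ 2)
      atTop (nhds 1) := by
    have hterm : ∀ π : Equiv.Perm (Fin p), Tendsto (fun T : ℝ =>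
        (1 / T ^ p) * ∫ t in Set.Icc (0 : Fin p → ℝ) (fun _ => T),
          ∏ j, (F ((t j - t (π j)) / τs)) ^ 2)
        atTop (nhds (if π = 1 then (1 : ℝ) else 0)) := by
      intro π
      by_cases h : π = 1
      · subst h
        simp only [if_pos rfl]
        refine Tendsto.congr' ?_ tendsto_const_nhds
        filter_upwards [eventually_gt_atTop (0 : ℝ)] with T hT
        exact (part2 T hT).symm
      · simpa [h] using part3 π h
    have hlim := tendsto_finset_sum Finset.univ fun π (_ : π ∈ Finset.univ) => hterm π
    have hsum1 : (∑ π : Equiv.Perm (Fin p), if π = 1 then (1 : ℝ) else 0) = 1 := by simp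
    rw [hsum1] at hlim
    exact hlim.congr fun T => (hsum T).symm
  exact ⟨part1, part2, part3⟩
end

section
/- Let τ_s > 0 and let F : ℝ → ℝ be measurable, even, integrable on ℝ, continuous at 0, with 0 ≤ F(t) ≤ F(0) = 1 for all t. Define F_T = T^{−2} ∫_0^T ∫_0^T F((t₁ − t₂)/τ_s)² dt₁ dt₂. Then F_T → 1 as T → 0⁺ and F_T → 0 as T → ∞. -/
open MeasureTheory Filter

theorem FT_limits_aux (G : ℝ → ℝ) (hGm : Measurable G) (hGint : Integrable G)
    (hGcont : ContinuousAt G 0) (hGnn : ∀ t, 0 ≤ G t) (hGle : ∀ t, G t ≤ 1)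
    (hG0 : G 0 = 1) :
    Tendsto (fun T : ℝ => (1 / T ^ 2) *
        ∫ t₁ in (0:ℝ)..T, ∫ t₂ in (0:ℝ)..T, G (t₁ - t₂))
      (nhdsWithin 0 (Set.Ioi 0)) (nhds 1)
    ∧ Tendsto (fun T : ℝ => (1 / T ^ 2) *
        ∫ t₁ in (0:ℝ)..T, ∫ t₂ in (0:ℝ)..T, G (t₁ - t₂))
      atTop (nhds 0) := by
  set J : ℝ := ∫ t, G t with hJ
  have hJ0 : 0 ≤ J := integral_nonneg hGnn
  -- interval integrability of the inner integrand
  have hii : ∀ (t₁ a b : ℝ), IntervalIntegrable (fun t₂ => G (t₁ - t₂)) volume a b := by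
    intro t₁ a b
    rw [intervalIntegrable_iff]
    refine Integrable.mono' (g := fun _ => (1:ℝ))
      (integrableOn_const measure_Ioc_lt_top.ne)
      ((hGm.comp (measurable_const.sub measurable_id)).aestronglyMeasurable)
      (ae_of_all _ fun x => ?_)
    rw [Real.norm_eq_abs, abs_of_nonneg (hGnn _)]
    exact hGle _
  -- inner integral nonneg
  have hinn : ∀ (t₁ T : ℝ), 0 ≤ T → 0 ≤ ∫ t₂ in (0:ℝ)..T, G (t₁ - t₂) := fun t₁ T hT =>
    intervalIntegral.integral_nonneg hT (fun x _ => hGnn _)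
  -- inner integral ≤ T
  have hinT : ∀ (t₁ T : ℝ), 0 ≤ T → (∫ t₂ in (0:ℝ)..T, G (t₁ - t₂)) ≤ T := by
    intro t₁ T hT
    calc (∫ t₂ in (0:ℝ)..T, G (t₁ - t₂)) ≤ ∫ _ in (0:ℝ)..T, (1:ℝ) :=
          intervalIntegral.integral_mono_on hT (hii _ _ _) intervalIntegrable_const
            (fun x _ => hGle _)
      _ = T := by simp
  -- inner integral ≤ J
  have hinJ : ∀ (t₁ T : ℝ), 0 ≤ T → (∫ t₂ in (0:ℝ)..T, G (t₁ - t₂)) ≤ J := by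
    intro t₁ T hT
    have h1 : (∫ t₂ in (0:ℝ)..T, G (t₁ - t₂)) = ∫ x in (t₁ - T)..t₁, G x := by
      simpa using intervalIntegral.integral_comp_sub_left (a := (0:ℝ)) (b := T) G t₁
    rw [h1, intervalIntegral.integral_of_le (by linarith : t₁ - T ≤ t₁)]
    exact setIntegral_le_integral hGint (ae_of_all _ hGnn)
  -- measurability of the inner integral as a function of t₁
  have hmeasΦ : ∀ T : ℝ, 0 ≤ T →
      StronglyMeasurable (fun t₁ => ∫ t₂ in (0:ℝ)..T, G (t₁ - t₂)) := by
    intro T hT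
    have h1 : (fun t₁ => ∫ t₂ in (0:ℝ)..T, G (t₁ - t₂))
        = fun t₁ => ∫ t₂ in Set.Ioc (0:ℝ) T, G (t₁ - t₂) := by
      funext t₁; rw [intervalIntegral.integral_of_le hT]
    rw [h1]
    exact StronglyMeasurable.integral_prod_right
      (ν := volume.restrict (Set.Ioc 0 T))
      ((hGm.comp measurable_sub).stronglyMeasurable)
  -- interval integrability of the outer integrand
  have hΦii : ∀ T : ℝ, 0 ≤ T →
      IntervalIntegrable (fun t₁ => ∫ t₂ in (0:ℝ)..T, G (t₁ - t₂)) volume 0 T := by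
    intro T hT
    rw [intervalIntegrable_iff]
    refine Integrable.mono' (g := fun _ => J)
      (integrableOn_const measure_Ioc_lt_top.ne)
      (hmeasΦ T hT).aestronglyMeasurable (ae_of_all _ fun x => ?_)
    rw [Real.norm_eq_abs, abs_of_nonneg (hinn _ _ hT)]
    exact hinJ _ _ hT
  constructor
  · -- T → 0⁺
    rw [Metric.tendsto_nhdsWithin_nhds]
    intro ε hε
    obtain ⟨δ, hδ, hδG⟩ := Metric.continuousAt_iff.mp hGcont (ε/2) (by positivity)
    refine ⟨δ, hδ, ?_⟩
    intro T hT hTδ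
    have hT0 : 0 < T := hT
    have hTδ' : T < δ := by
      rw [Real.dist_eq, sub_zero, abs_of_pos hT0] at hTδ; exact hTδ
    have hGlow : ∀ t : ℝ, |t| ≤ T → 1 - ε/2 ≤ G t := by
      intro t ht
      have : dist t 0 < δ := by
        rw [Real.dist_eq, sub_zero]; exact lt_of_le_of_lt ht hTδ'
      have h2 := hδG this
      rw [Real.dist_eq, hG0] at h2
      have := abs_lt.mp h2
      linarith [this.1]
    have hinlow : ∀ t₁ ∈ Set.Icc (0:ℝ) T, (1 - ε/2) * T ≤ ∫ t₂ in (0:ℝ)..T, G (t₁ - t₂) := by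
      intro t₁ ht₁
      calc (1 - ε/2) * T = ∫ _ in (0:ℝ)..T, (1 - ε/2) := by simp; ring
        _ ≤ ∫ t₂ in (0:ℝ)..T, G (t₁ - t₂) := by
            refine intervalIntegral.integral_mono_on hT0.le intervalIntegrable_const
              (hii _ _ _) (fun x hx => ?_)
            refine hGlow _ ?_
            rw [abs_le]
            constructor <;> [skip; skip] <;>
              · obtain ⟨h1, h2⟩ := ht₁; obtain ⟨h3, h4⟩ := hx; linarith
    have hIlow : (1 - ε/2) * T * T ≤ ∫ t₁ in (0:ℝ)..T, ∫ t₂ in (0:ℝ)..T, G (t₁ - t₂) := by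
      calc (1 - ε/2) * T * T = ∫ _ in (0:ℝ)..T, ((1 - ε/2) * T) := by
            simp; ring
        _ ≤ _ := intervalIntegral.integral_mono_on hT0.le intervalIntegrable_const
            (hΦii T hT0.le) hinlow
    have hIhigh : (∫ t₁ in (0:ℝ)..T, ∫ t₂ in (0:ℝ)..T, G (t₁ - t₂)) ≤ T * T := by
      calc (∫ t₁ in (0:ℝ)..T, ∫ t₂ in (0:ℝ)..T, G (t₁ - t₂)) ≤ ∫ _ in (0:ℝ)..T, T :=
            intervalIntegral.integral_mono_on hT0.le (hΦii T hT0.le) intervalIntegrable_const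
              (fun x _ => hinT _ _ hT0.le)
        _ = T * T := by simp [mul_comm]
    rw [Real.dist_eq]
    have hT2 : (0:ℝ) < T ^ 2 := by positivity
    set I := ∫ t₁ in (0:ℝ)..T, ∫ t₂ in (0:ℝ)..T, G (t₁ - t₂)
    have hlow : 1 - ε/2 ≤ (1/T^2) * I := by
      have h := mul_le_mul_of_nonneg_left hIlow (by positivity : (0:ℝ) ≤ 1/T^2)
      have heq : (1/T^2) * ((1 - ε/2) * T * T) = 1 - ε/2 := by field_simp
      rw [heq] at h; exact h
    have hhigh : (1/T^2) * I ≤ 1 := by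
      have h := mul_le_mul_of_nonneg_left hIhigh (by positivity : (0:ℝ) ≤ 1/T^2)
      have heq : (1/T^2) * (T * T) = 1 := by field_simp
      rw [heq] at h; exact h
    rw [abs_lt]
    constructor <;> linarith
  · -- T → ∞
    have hub : ∀ T : ℝ, 0 < T →
        (1/T^2) * (∫ t₁ in (0:ℝ)..T, ∫ t₂ in (0:ℝ)..T, G (t₁ - t₂)) ≤ J / T := by
      intro T hT
      have hbound : ‖∫ t₁ in (0:ℝ)..T, ∫ t₂ in (0:ℝ)..T, G (t₁ - t₂)‖ ≤ J * |T - 0| := by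
        refine intervalIntegral.norm_integral_le_of_norm_le_const (fun x hx => ?_)
        rw [Real.norm_eq_abs, abs_of_nonneg (hinn _ _ hT.le)]
        exact hinJ _ _ hT.le
      rw [Real.norm_eq_abs, sub_zero, abs_of_pos hT] at hbound
      have h2 : (∫ t₁ in (0:ℝ)..T, ∫ t₂ in (0:ℝ)..T, G (t₁ - t₂)) ≤ J * T :=
        (le_abs_self _).trans hbound
      have heq : (1/T^2) * (J * T) = J / T := by field_simp
      calc (1/T^2) * (∫ t₁ in (0:ℝ)..T, ∫ t₂ in (0:ℝ)..T, G (t₁ - t₂))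
          ≤ (1/T^2) * (J * T) := mul_le_mul_of_nonneg_left h2 (by positivity)
        _ = J / T := heq
    have hJT : Tendsto (fun T : ℝ => J / T) atTop (nhds 0) :=
      tendsto_const_nhds.div_atTop tendsto_id
    refine tendsto_of_tendsto_of_tendsto_of_le_of_le' tendsto_const_nhds hJT ?_ ?_
    · filter_upwards [eventually_gt_atTop (0:ℝ)] with T hT
      exact mul_nonneg (by positivity)
        (intervalIntegral.integral_nonneg hT.le fun x _ => hinn x T hT.le)
    · filter_upwards [eventually_gt_atTop (0:ℝ)] with T hT
      exact hub T hT

/-- The second-order time-averaging factor `F_T` tends to `1` as `T → 0⁺` and to `0`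
as `T → ∞`. -/
theorem FT_limits (τs : ℝ) (hτ : 0 < τs) (F : ℝ → ℝ) (hFmeas : Measurable F)
    (hFeven : ∀ t : ℝ, F (-t) = F t) (hFint : Integrable F)
    (hFcont : ContinuousAt F 0)
    (hFnonneg : ∀ t : ℝ, 0 ≤ F t) (hFle : ∀ t : ℝ, F t ≤ F 0) (hF0 : F 0 = 1) :
    Tendsto (fun T : ℝ => (1 / T ^ 2) *
        ∫ t₁ in (0:ℝ)..T, ∫ t₂ in (0:ℝ)..T, (F ((t₁ - t₂) / τs)) ^ 2)
      (nhdsWithin 0 (Set.Ioi 0)) (nhds 1)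
    ∧ Tendsto (fun T : ℝ => (1 / T ^ 2) *
        ∫ t₁ in (0:ℝ)..T, ∫ t₂ in (0:ℝ)..T, (F ((t₁ - t₂) / τs)) ^ 2)
      atTop (nhds 0) := by
  have hGm : Measurable fun t : ℝ => (F (t / τs)) ^ 2 :=
    (hFmeas.comp (measurable_id.div_const τs)).pow_const 2
  have hGnn : ∀ t : ℝ, 0 ≤ (F (t / τs)) ^ 2 := fun t => sq_nonneg _
  have hFle1 : ∀ t : ℝ, F t ≤ 1 := fun t => (hFle t).trans_eq hF0
  have hGle : ∀ t : ℝ, (F (t / τs)) ^ 2 ≤ 1 := fun t =>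
    pow_le_one₀ (hFnonneg _) (hFle1 _)
  have hG0 : (F ((0:ℝ) / τs)) ^ 2 = 1 := by rw [zero_div, hF0]; norm_num
  have hGcont : ContinuousAt (fun t : ℝ => (F (t / τs)) ^ 2) 0 := by
    have h1 : ContinuousAt (fun t : ℝ => F (t / τs)) 0 := by
      have : ContinuousAt (fun t : ℝ => t / τs) 0 := (continuous_id.div_const τs).continuousAt
      have hF' : ContinuousAt F ((0:ℝ) / τs) := by rwa [zero_div]
      exact ContinuousAt.comp (f := fun t : ℝ => t / τs) hF' this
    exact h1.pow 2
  have hGint : Integrable fun t : ℝ => (F (t / τs)) ^ 2 := by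
    have h1 : Integrable fun t : ℝ => F (t / τs) := hFint.comp_div hτ.ne'
    refine h1.mono hGm.aestronglyMeasurable (ae_of_all _ fun t => ?_)
    rw [Real.norm_eq_abs, Real.norm_eq_abs, abs_of_nonneg (hGnn t),
      abs_of_nonneg (hFnonneg _)]
    nlinarith [hFnonneg (t / τs), hFle1 (t / τs)]
  exact FT_limits_aux (fun t => (F (t / τs)) ^ 2) hGm hGint hGcont hGnn hGle hG0
end

section
/- Let Ξ be a symmetric negative definite real d × d matrix, θ > 0, and let Γ : ℝ^d × ℝ^d → ℝ be a Schwartz function with Γ(r,0) ≥ 0 for all r and ∫_{ℝ^d} Γ(r,0) dr > 0. Set J(x,y) = Γ((x+y)/2, (x−y)/θ), and define, for z > 0 and r ∈ ℝ^d, E(z,r) = (12/z³)^{d/2} (2π)^{−d/2} |det Ξ|^{−1/2} ∫_{ℝ^d} exp((6/z³)(r−x)ᵀΞ⁻¹(r−x)) J(x,x) dx and χ(z,r) = (12/z³)^{d} (2π)^{−d} |det Ξ|^{−1} ∫_{ℝ^{2d}} exp((6/z³)[(r−x)ᵀΞ⁻¹(r−x) + (r−y)ᵀΞ⁻¹(r−y)])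 J(x,y)² dx dy. Then for every fixed r, lim_{z→∞} χ(z,r)/E(z,r)² = θ^d (∫_{ℝ^{2d}} Γ(r′,σ′)² dr′dσ′) / (∫_{ℝ^d} Γ(r′,0) dr′)². -/
open Matrix MeasureTheory Filter

/-- Limiting average intensity `E[I](z,r)` in the diffusive regime with `β = 1`. -/
noncomputable def avgIntensity {d : ℕ} (Ξ : Matrix (Fin d) (Fin d) ℝ)
    (J : (Fin d → ℝ) → (Fin d → ℝ) → ℝ) (z : ℝ) (r : Fin d → ℝ) : ℝ :=
  (12 / z ^ 3) ^ ((d : ℝ) / 2) * (2 * Real.pi) ^ (-(d : ℝ) / 2) *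
    |Ξ.det| ^ (-(1 : ℝ) / 2) *
    ∫ x : Fin d → ℝ,
      Real.exp ((6 / z ^ 3) * ((r - x) ⬝ᵥ Ξ⁻¹.mulVec (r - x))) * J x x

/-- Cross-correlation component `χ(z,r)` of the limiting second moment of intensity. -/
noncomputable def crossCorr {d : ℕ} (Ξ : Matrix (Fin d) (Fin d) ℝ)
    (J : (Fin d → ℝ) → (Fin d → ℝ) → ℝ) (z : ℝ) (r : Fin d → ℝ) : ℝ :=
  (12 / z ^ 3) ^ (d : ℝ) * (2 * Real.pi) ^ (-(d : ℝ)) * |Ξ.det|⁻¹ *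
    ∫ q : (Fin d → ℝ) × (Fin d → ℝ),
      Real.exp ((6 / z ^ 3) * (((r - q.1) ⬝ᵥ Ξ⁻¹.mulVec (r - q.1))
        + ((r - q.2) ⬝ᵥ Ξ⁻¹.mulVec (r - q.2)))) * (J q.1 q.2) ^ 2

instance prodVolumeIsAddHaar (d : ℕ) :
    Measure.IsAddHaarMeasure (volume : Measure ((Fin d → ℝ) × (Fin d → ℝ))) := by
  rw [Measure.volume_eq_prod]; exact Measure.prod.instIsAddHaarMeasure _ _

/-- Dominated convergence for the Gaussian-weighted integrals: as `z → ∞` the weight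
`exp((6/z³) Q x)` tends to `1` and is bounded by `1` since `Q ≤ 0`. -/
theorem aux_exp_tendsto {α : Type*} [MeasurableSpace α] {μ : Measure α}
    {Q g : α → ℝ} (hQm : Measurable Q) (hQ : ∀ v, Q v ≤ 0)
    (hg : Integrable g μ) :
    Tendsto (fun z : ℝ => ∫ x, Real.exp ((6 / z ^ 3) * Q x) * g x ∂μ) atTop
      (nhds (∫ x, g x ∂μ)) := by
  have hc : Tendsto (fun z : ℝ => 6 / z ^ 3) atTop (nhds 0) := by
    have h1 : Tendsto (fun z : ℝ => z ^ 3) atTop atTop :=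
      tendsto_pow_atTop (by norm_num)
    have h2 := h1.inv_tendsto_atTop.const_mul (6 : ℝ)
    simpa [div_eq_mul_inv] using h2
  apply tendsto_integral_filter_of_dominated_convergence (fun x => ‖g x‖)
  · filter_upwards with z
    exact (Real.measurable_exp.comp (measurable_const.mul hQm)).aestronglyMeasurable.mul hg.1
  · filter_upwards [eventually_ge_atTop (1 : ℝ)] with z hz
    refine Eventually.of_forall fun x => ?_
    have hz0 : (0 : ℝ) ≤ z := by linarith
    have hnn : (0 : ℝ) ≤ 6 / z ^ 3 := div_nonneg (by norm_num) (by positivity)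
    have hle : Real.exp ((6 / z ^ 3) * Q x) ≤ 1 := by
      rw [Real.exp_le_one_iff]
      exact mul_nonpos_iff.2 (Or.inl ⟨hnn, hQ x⟩)
    rw [norm_mul, Real.norm_eq_abs, abs_of_pos (Real.exp_pos _)]
    exact mul_le_of_le_one_left (norm_nonneg _) hle
  · exact hg.norm
  · refine Eventually.of_forall fun x => ?_
    have h1 : Tendsto (fun z : ℝ => (6 / z ^ 3) * Q x) atTop (nhds 0) := by
      simpa using hc.mul_const (Q x)
    have h2 := (Real.continuous_exp.tendsto 0).comp h1
    have h3 := h2.mul_const (g x)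
    simpa using h3

/-- The square of a real Schwartz function is integrable. -/
theorem schwartz_sq_integrable {D : Type*} [NormedAddCommGroup D] [NormedSpace ℝ D]
    [MeasurableSpace D] [BorelSpace D] [SecondCountableTopology D]
    (μ : Measure D) [μ.HasTemperateGrowth] (f : SchwartzMap D ℝ) :
    Integrable (fun x => (f x) ^ 2) μ := by
  have h := (f.integrable (μ := μ)).bdd_mul f.continuous.aestronglyMeasurable
      (Eventually.of_forall fun x => SchwartzMap.norm_le_seminorm ℝ f x)
  simpa [pow_two] using h

section CLE

variable (d : ℕ) (θ : ℝ)

/-- Forward map of the change of variables. -/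
noncomputable def covF : ((Fin d → ℝ) × (Fin d → ℝ)) →L[ℝ] ((Fin d → ℝ) × (Fin d → ℝ)) :=
  (((2:ℝ)⁻¹) • (ContinuousLinearMap.fst ℝ (Fin d → ℝ) (Fin d → ℝ)
      + ContinuousLinearMap.snd ℝ (Fin d → ℝ) (Fin d → ℝ))).prod
    ((θ⁻¹) • (ContinuousLinearMap.fst ℝ (Fin d → ℝ) (Fin d → ℝ)
      - ContinuousLinearMap.snd ℝ (Fin d → ℝ) (Fin d → ℝ)))

@[simp] lemma covF_apply (p : (Fin d → ℝ) × (Fin d → ℝ)) :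
    covF d θ p = ((2:ℝ)⁻¹ • (p.1 + p.2), θ⁻¹ • (p.1 - p.2)) := by
  simp [covF]

/-- Backward map of the change of variables. -/
noncomputable def covG : ((Fin d → ℝ) × (Fin d → ℝ)) →L[ℝ] ((Fin d → ℝ) × (Fin d → ℝ)) :=
  ((ContinuousLinearMap.fst ℝ (Fin d → ℝ) (Fin d → ℝ)
      + (θ/2) • ContinuousLinearMap.snd ℝ (Fin d → ℝ) (Fin d → ℝ)).prod
    (ContinuousLinearMap.fst ℝ (Fin d → ℝ) (Fin d → ℝ)
      - (θ/2) • ContinuousLinearMap.snd ℝ (Fin d → ℝ) (Fin d → ℝ)))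

@[simp] lemma covG_apply (p : (Fin d → ℝ) × (Fin d → ℝ)) :
    covG d θ p = (p.1 + (θ/2) • p.2, p.1 - (θ/2) • p.2) := by
  simp [covG]

/-- Forward shear map. -/
noncomputable def covF2 : ((Fin d → ℝ) × (Fin d → ℝ)) →L[ℝ] ((Fin d → ℝ) × (Fin d → ℝ)) :=
  ((ContinuousLinearMap.fst ℝ (Fin d → ℝ) (Fin d → ℝ)
      + (2:ℝ)⁻¹ • ContinuousLinearMap.snd ℝ (Fin d → ℝ) (Fin d → ℝ)).prod
    ((-θ⁻¹) • ContinuousLinearMap.snd ℝ (Fin d → ℝ) (Fin d → ℝ)))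

@[simp] lemma covF2_apply (p : (Fin d → ℝ) × (Fin d → ℝ)) :
    covF2 d θ p = (p.1 + (2:ℝ)⁻¹ • p.2, -(θ⁻¹ • p.2)) := by
  simp [covF2, neg_smul]

/-- Backward shear map. -/
noncomputable def covG2 : ((Fin d → ℝ) × (Fin d → ℝ)) →L[ℝ] ((Fin d → ℝ) × (Fin d → ℝ)) :=
  ((ContinuousLinearMap.fst ℝ (Fin d → ℝ) (Fin d → ℝ)
      + (θ/2) • ContinuousLinearMap.snd ℝ (Fin d → ℝ) (Fin d → ℝ)).prod
    ((-θ) • ContinuousLinearMap.snd ℝ (Fin d → ℝ) (Fin d → ℝ)))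

@[simp] lemma covG2_apply (p : (Fin d → ℝ) × (Fin d → ℝ)) :
    covG2 d θ p = (p.1 + (θ/2) • p.2, -(θ • p.2)) := by
  simp [covG2, neg_smul]

variable {θ}

/-- The change of variables `(x, y) ↦ ((x+y)/2, (x-y)/θ)` as a continuous linear equiv. -/
noncomputable def covCLE (hθ : θ ≠ 0) :
    ((Fin d → ℝ) × (Fin d → ℝ)) ≃L[ℝ] ((Fin d → ℝ) × (Fin d → ℝ)) :=
  ContinuousLinearEquiv.equivOfInverse (covF d θ) (covG d θ)
    (by
      intro p
      rw [covF_apply, covG_apply]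
      ext1
      · show (2:ℝ)⁻¹ • (p.1 + p.2) + (θ/2) • θ⁻¹ • (p.1 - p.2) = p.1
        match_scalars <;> (field_simp; try ring)
      · show (2:ℝ)⁻¹ • (p.1 + p.2) - (θ/2) • θ⁻¹ • (p.1 - p.2) = p.2
        match_scalars <;> (field_simp; try ring))
    (by
      intro q
      rw [covG_apply, covF_apply]
      ext1
      · show (2:ℝ)⁻¹ • ((q.1 + (θ/2) • q.2) + (q.1 - (θ/2) • q.2)) = q.1
        match_scalars <;> (field_simp; try ring)
      · show θ⁻¹ • ((q.1 + (θ/2) • q.2) - (q.1 - (θ/2) • q.2)) = q.2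
        match_scalars <;> (field_simp; try ring))

@[simp] lemma covCLE_apply (hθ : θ ≠ 0) (p : (Fin d → ℝ) × (Fin d → ℝ)) :
    covCLE d hθ p = ((2:ℝ)⁻¹ • (p.1 + p.2), θ⁻¹ • (p.1 - p.2)) := by
  rw [covCLE, ContinuousLinearEquiv.equivOfInverse_apply, covF_apply]

/-- The shear `(x, y) ↦ (x + y/2, -y/θ)` as a continuous linear equiv. -/
noncomputable def covCLE2 (hθ : θ ≠ 0) :
    ((Fin d → ℝ) × (Fin d → ℝ)) ≃L[ℝ] ((Fin d → ℝ) × (Fin d → ℝ)) :=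
  ContinuousLinearEquiv.equivOfInverse (covF2 d θ) (covG2 d θ)
    (by
      intro p
      rw [covF2_apply, covG2_apply]
      ext1
      · show (p.1 + (2:ℝ)⁻¹ • p.2) + (θ/2) • (-(θ⁻¹ • p.2)) = p.1
        match_scalars <;> (field_simp; try ring)
      · show -(θ • (-(θ⁻¹ • p.2))) = p.2
        match_scalars <;> (field_simp; try ring))
    (by
      intro q
      rw [covG2_apply, covF2_apply]
      ext1
      · show (q.1 + (θ/2) • q.2) + (2:ℝ)⁻¹ • (-(θ • q.2)) = q.1
        match_scalars <;> (field_simp; try ring)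
      · show -(θ⁻¹ • (-(θ • q.2))) = q.2
        match_scalars <;> (field_simp; try ring))

@[simp] lemma covCLE2_apply (hθ : θ ≠ 0) (p : (Fin d → ℝ) × (Fin d → ℝ)) :
    covCLE2 d hθ p = (p.1 + (2:ℝ)⁻¹ • p.2, -(θ⁻¹ • p.2)) := by
  rw [covCLE2, ContinuousLinearEquiv.equivOfInverse_apply, covF2_apply]

end CLE

/-- Change of variables: `∫ Γ((x+y)/2, (x-y)/θ)² d(x,y) = θ^d ∫ Γ²`. -/
theorem aux_cov (d : ℕ) {θ : ℝ} (hθ : 0 < θ)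
    (Γ : SchwartzMap ((Fin d → ℝ) × (Fin d → ℝ)) ℝ) :
    (∫ p : (Fin d → ℝ) × (Fin d → ℝ),
        (Γ ((2:ℝ)⁻¹ • (p.1 + p.2), θ⁻¹ • (p.1 - p.2))) ^ 2)
      = θ ^ d * ∫ q : (Fin d → ℝ) × (Fin d → ℝ), (Γ q) ^ 2 := by
  have hθ' : θ ≠ 0 := hθ.ne'
  set L := covCLE d hθ' with hL
  set L2 := covCLE2 d hθ' with hL2
  -- integrability facts
  have hintL : Integrable (fun p : (Fin d → ℝ) × (Fin d → ℝ) => (Γ (L p)) ^ 2)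
      (volume.prod volume) := by
    have := schwartz_sq_integrable volume
      (SchwartzMap.compCLMOfContinuousLinearEquiv ℝ L Γ)
    rw [Measure.volume_eq_prod] at this
    simpa using this
  have hintL2 : Integrable (fun p : (Fin d → ℝ) × (Fin d → ℝ) => (Γ (L2 p)) ^ 2)
      (volume.prod volume) := by
    have := schwartz_sq_integrable volume
      (SchwartzMap.compCLMOfContinuousLinearEquiv ℝ L2 Γ)
    rw [Measure.volume_eq_prod] at this
    simpa using this
  have hintΓ : Integrable (fun q : (Fin d → ℝ) × (Fin d → ℝ) => (Γ q) ^ 2)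
      (volume.prod volume) := by
    have := schwartz_sq_integrable volume Γ
    rwa [Measure.volume_eq_prod] at this
  -- the key pointwise identity L (x, y + x) = L2 (x, y)
  have hshear : ∀ x y : Fin d → ℝ, L (x, y + x) = L2 (x, y) := by
    intro x y
    rw [hL, hL2, covCLE_apply, covCLE2_apply]
    ext1
    · show (2:ℝ)⁻¹ • (x + (y + x)) = x + (2:ℝ)⁻¹ • y
      module
    · show θ⁻¹ • (x - (y + x)) = -(θ⁻¹ • y)
      module
  calc
    (∫ p : (Fin d → ℝ) × (Fin d → ℝ),
        (Γ ((2:ℝ)⁻¹ • (p.1 + p.2), θ⁻¹ • (p.1 - p.2))) ^ 2)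
      = ∫ p : (Fin d → ℝ) × (Fin d → ℝ), (Γ (L p)) ^ 2 := by
        refine integral_congr_ae (Eventually.of_forall fun p => ?_)
        show (Γ ((2:ℝ)⁻¹ • (p.1 + p.2), θ⁻¹ • (p.1 - p.2))) ^ 2 = (Γ (L p)) ^ 2
        rw [hL, covCLE_apply]
    _ = ∫ x : Fin d → ℝ, ∫ y : Fin d → ℝ, (Γ (L (x, y))) ^ 2 := by
        rw [Measure.volume_eq_prod, integral_prod _ hintL]
    _ = ∫ x : Fin d → ℝ, ∫ y : Fin d → ℝ, (Γ (L2 (x, y))) ^ 2 := by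
        refine integral_congr_ae (Eventually.of_forall fun x => ?_)
        show (∫ y : Fin d → ℝ, (Γ (L (x, y))) ^ 2) = ∫ y : Fin d → ℝ, (Γ (L2 (x, y))) ^ 2
        rw [← integral_add_right_eq_self (fun y => (Γ (L (x, y))) ^ 2) x]
        refine integral_congr_ae (Eventually.of_forall fun y => ?_)
        show (Γ (L (x, y + x))) ^ 2 = (Γ (L2 (x, y))) ^ 2
        rw [hshear]
    _ = ∫ y : Fin d → ℝ, ∫ x : Fin d → ℝ, (Γ (L2 (x, y))) ^ 2 := by
        exact integral_integral_swap (f := fun x y => (Γ (L2 (x, y))) ^ 2) hintL2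
    _ = ∫ y : Fin d → ℝ, ∫ x : Fin d → ℝ, (Γ (x, -(θ⁻¹ • y))) ^ 2 := by
        refine integral_congr_ae (Eventually.of_forall fun y => ?_)
        show (∫ x : Fin d → ℝ, (Γ (L2 (x, y))) ^ 2) = ∫ x : Fin d → ℝ, (Γ (x, -(θ⁻¹ • y))) ^ 2
        rw [← integral_add_right_eq_self (fun x => (Γ (x, -(θ⁻¹ • y))) ^ 2) ((2:ℝ)⁻¹ • y)]
        refine integral_congr_ae (Eventually.of_forall fun x => ?_)
        show (Γ (L2 (x, y))) ^ 2 = (Γ (x + (2:ℝ)⁻¹ • y, -(θ⁻¹ • y))) ^ 2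
        rw [hL2, covCLE2_apply]
    _ = ∫ y : Fin d → ℝ, ∫ x : Fin d → ℝ, (Γ (x, θ⁻¹ • y)) ^ 2 := by
        have h := integral_neg_eq_self
          (fun y : Fin d → ℝ => ∫ x : Fin d → ℝ, (Γ (x, θ⁻¹ • y)) ^ 2) volume
        calc ∫ y : Fin d → ℝ, ∫ x : Fin d → ℝ, (Γ (x, -(θ⁻¹ • y))) ^ 2
            = ∫ y : Fin d → ℝ, ∫ x : Fin d → ℝ, (Γ (x, θ⁻¹ • (-y))) ^ 2 := by
              refine integral_congr_ae (Eventually.of_forall fun y => ?_)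
              show (∫ x : Fin d → ℝ, (Γ (x, -(θ⁻¹ • y))) ^ 2)
                  = ∫ x : Fin d → ℝ, (Γ (x, θ⁻¹ • (-y))) ^ 2
              rw [smul_neg]
          _ = ∫ y : Fin d → ℝ, ∫ x : Fin d → ℝ, (Γ (x, θ⁻¹ • y)) ^ 2 := h
    _ = θ ^ d * ∫ y : Fin d → ℝ, ∫ x : Fin d → ℝ, (Γ (x, y)) ^ 2 := by
        have h := Measure.integral_comp_inv_smul_of_nonneg (volume : Measure (Fin d → ℝ))
          (fun v : Fin d → ℝ => ∫ x : Fin d → ℝ, (Γ (x, v)) ^ 2) hθ.le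
        rw [h, Module.finrank_fin_fun, smul_eq_mul]
    _ = θ ^ d * ∫ q : (Fin d → ℝ) × (Fin d → ℝ), (Γ q) ^ 2 := by
        congr 1
        rw [show (∫ y : Fin d → ℝ, ∫ x : Fin d → ℝ, (Γ (x, y)) ^ 2)
            = ∫ x : Fin d → ℝ, ∫ y : Fin d → ℝ, (Γ (x, y)) ^ 2 from
          (integral_integral_swap (f := fun x y => (Γ (x, y)) ^ 2) hintΓ).symm]
        rw [Measure.volume_eq_prod, integral_prod _ hintΓ]

/-- Long-distance limit of the ratio `χ(z,r)/E[I](z,r)²` for a partially coherent source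
with two-point correlation profile `Γ` and relative coherence length `θ`:
it converges to `θ^d ∫Γ² / (∫Γ(·,0))²` as `z → ∞`. -/
theorem crossCorr_ratio_tendsto (d : ℕ) (hd : 1 ≤ d)
    (Ξ : Matrix (Fin d) (Fin d) ℝ) (hsymm : Ξ.IsSymm) (hneg : (-Ξ).PosDef)
    (θ : ℝ) (hθ : 0 < θ)
    (Γ : SchwartzMap ((Fin d → ℝ) × (Fin d → ℝ)) ℝ)
    (hΓ0 : ∀ r : Fin d → ℝ, 0 ≤ Γ (r, 0))
    (hΓint : 0 < ∫ r : Fin d → ℝ, Γ (r, 0))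
    (J : (Fin d → ℝ) → (Fin d → ℝ) → ℝ)
    (hJ : ∀ x y, J x y = Γ ((2 : ℝ)⁻¹ • (x + y), θ⁻¹ • (x - y)))
    (r : Fin d → ℝ) :
    Tendsto (fun z : ℝ => crossCorr Ξ J z r / (avgIntensity Ξ J z r) ^ 2)
      atTop
      (nhds (θ ^ d * (∫ q : (Fin d → ℝ) × (Fin d → ℝ), (Γ q) ^ 2)
        / (∫ r' : Fin d → ℝ, Γ (r', 0)) ^ 2)) := by
  classical
  have hθ' : θ ≠ 0 := hθ.ne'
  -- matrix facts
  have hdet : Ξ.det ≠ 0 := by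
    have h1 : (0:ℝ) < (-Ξ).det := hneg.det_pos
    have h2 : (-Ξ).det = (-1) ^ (Fintype.card (Fin d)) * Ξ.det := Matrix.det_neg Ξ
    intro h
    rw [h2, h, mul_zero] at h1
    exact lt_irrefl _ h1
  have hXinv : (-Ξ)⁻¹ = -(Ξ⁻¹) := by
    apply Matrix.inv_eq_right_inv
    rw [neg_mul_neg]
    exact Matrix.mul_nonsing_inv Ξ (isUnit_iff_ne_zero.mpr hdet)
  have hQneg : ∀ w : Fin d → ℝ, w ⬝ᵥ Ξ⁻¹.mulVec w ≤ 0 := by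
    intro w
    have h1 : (0:ℝ) ≤ star w ⬝ᵥ ((-Ξ)⁻¹ *ᵥ w) := (hneg.inv.posSemidef).dotProduct_mulVec_nonneg w
    rw [hXinv] at h1
    simp only [star_trivial, Matrix.neg_mulVec, dotProduct_neg] at h1
    linarith
  have hQc : Continuous (fun x : Fin d → ℝ => (r - x) ⬝ᵥ Ξ⁻¹.mulVec (r - x)) := by
    simp only [Matrix.mulVec, dotProduct, Pi.sub_apply]
    apply continuous_finset_sum
    intro i _
    apply Continuous.mul
    · exact continuous_const.sub (continuous_apply i)
    · apply continuous_finset_sum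
      intro j _
      exact continuous_const.mul (continuous_const.sub (continuous_apply j))
  -- Schwartz components
  set Γ0 : SchwartzMap (Fin d → ℝ) ℝ :=
    SchwartzMap.compCLM (𝕜 := ℝ)
      (ContinuousLinearMap.inl ℝ (Fin d → ℝ) (Fin d → ℝ)).hasTemperateGrowth
      ⟨1, 1, fun x => by
        have h1 : ‖x‖ ≤ ‖((x, 0) : (Fin d → ℝ) × (Fin d → ℝ))‖ :=
          norm_fst_le ((x, 0) : (Fin d → ℝ) × (Fin d → ℝ))
        simpa using le_trans h1
          (by linarith [norm_nonneg ((x, 0) : (Fin d → ℝ) × (Fin d → ℝ))])⟩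
      Γ with hΓ0def
  have hΓ0app : ∀ x : Fin d → ℝ, Γ0 x = Γ (x, 0) := by
    intro x
    rw [hΓ0def]
    simp
  set ΓJ : SchwartzMap ((Fin d → ℝ) × (Fin d → ℝ)) ℝ :=
    SchwartzMap.compCLMOfContinuousLinearEquiv ℝ (covCLE d hθ') Γ with hΓJdef
  have hΓJapp : ∀ p : (Fin d → ℝ) × (Fin d → ℝ),
      ΓJ p = Γ ((2:ℝ)⁻¹ • (p.1 + p.2), θ⁻¹ • (p.1 - p.2)) := by
    intro p
    rw [hΓJdef]
    simp
  -- pointwise identities for J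
  have hJdiag : ∀ x : Fin d → ℝ, J x x = Γ (x, 0) := by
    intro x
    rw [hJ]
    have h2 : (2:ℝ)⁻¹ • (x + x) = x := by module
    have h3 : θ⁻¹ • (x - x) = (0 : Fin d → ℝ) := by simp
    rw [h2, h3]
  have hJpair : ∀ p : (Fin d → ℝ) × (Fin d → ℝ), J p.1 p.2 = ΓJ p := by
    intro p
    rw [hJ, hΓJapp]
  -- integrability
  have hg1 : Integrable (fun x : Fin d → ℝ => J x x) := by
    refine (Γ0.integrable).congr (Eventually.of_forall fun x => ?_)
    show Γ0 x = J x x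
    rw [hJdiag, hΓ0app]
  have hg2 : Integrable (fun q : (Fin d → ℝ) × (Fin d → ℝ) => (J q.1 q.2) ^ 2) := by
    refine (schwartz_sq_integrable volume ΓJ).congr (Eventually.of_forall fun q => ?_)
    show (ΓJ q) ^ 2 = (J q.1 q.2) ^ 2
    rw [hJpair]
  -- convergence of the two integrals
  have tendD : Tendsto (fun z : ℝ => ∫ x : Fin d → ℝ,
      Real.exp ((6 / z ^ 3) * ((r - x) ⬝ᵥ Ξ⁻¹.mulVec (r - x))) * J x x) atTop
      (nhds (∫ x : Fin d → ℝ, J x x)) :=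
    aux_exp_tendsto hQc.measurable (fun x => hQneg _) hg1
  have tendN : Tendsto (fun z : ℝ => ∫ q : (Fin d → ℝ) × (Fin d → ℝ),
      Real.exp ((6 / z ^ 3) * (((r - q.1) ⬝ᵥ Ξ⁻¹.mulVec (r - q.1))
        + ((r - q.2) ⬝ᵥ Ξ⁻¹.mulVec (r - q.2)))) * (J q.1 q.2) ^ 2) atTop
      (nhds (∫ q : (Fin d → ℝ) × (Fin d → ℝ), (J q.1 q.2) ^ 2)) :=
    aux_exp_tendsto ((hQc.comp continuous_fst).add (hQc.comp continuous_snd)).measurable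
      (fun q => add_nonpos (hQneg _) (hQneg _)) hg2
  -- values of the limits
  have hDval : (∫ x : Fin d → ℝ, J x x) = ∫ x : Fin d → ℝ, Γ (x, 0) :=
    integral_congr_ae (Eventually.of_forall fun x => hJdiag x)
  have hNval : (∫ q : (Fin d → ℝ) × (Fin d → ℝ), (J q.1 q.2) ^ 2)
      = θ ^ d * ∫ q : (Fin d → ℝ) × (Fin d → ℝ), (Γ q) ^ 2 := by
    rw [show (∫ q : (Fin d → ℝ) × (Fin d → ℝ), (J q.1 q.2) ^ 2)
        = ∫ p : (Fin d → ℝ) × (Fin d → ℝ),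
            (Γ ((2:ℝ)⁻¹ • (p.1 + p.2), θ⁻¹ • (p.1 - p.2))) ^ 2 from
      integral_congr_ae (Eventually.of_forall fun p => by
        show J p.1 p.2 ^ 2 = (Γ ((2:ℝ)⁻¹ • (p.1 + p.2), θ⁻¹ • (p.1 - p.2))) ^ 2
        rw [hJ])]
    exact aux_cov d hθ Γ
  have hDpos : (0:ℝ) < ∫ x : Fin d → ℝ, J x x := by rw [hDval]; exact hΓint
  -- the combined limit
  have hND : Tendsto (fun z : ℝ =>
      (∫ q : (Fin d → ℝ) × (Fin d → ℝ),
        Real.exp ((6 / z ^ 3) * (((r - q.1) ⬝ᵥ Ξ⁻¹.mulVec (r - q.1))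
          + ((r - q.2) ⬝ᵥ Ξ⁻¹.mulVec (r - q.2)))) * (J q.1 q.2) ^ 2)
      / (∫ x : Fin d → ℝ,
        Real.exp ((6 / z ^ 3) * ((r - x) ⬝ᵥ Ξ⁻¹.mulVec (r - x))) * J x x) ^ 2) atTop
      (nhds (θ ^ d * (∫ q : (Fin d → ℝ) × (Fin d → ℝ), (Γ q) ^ 2)
        / (∫ r' : Fin d → ℝ, Γ (r', 0)) ^ 2)) := by
    have h := tendN.div (tendD.pow 2) (pow_ne_zero 2 hDpos.ne')
    rwa [hNval, hDval] at h
  -- prefactor cancellation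
  refine Tendsto.congr' ?_ hND
  filter_upwards [eventually_ge_atTop (1:ℝ)] with z hz
  have hz0 : (0:ℝ) < z := lt_of_lt_of_le one_pos hz
  have ha : (0:ℝ) < 12 / z ^ 3 := div_pos (by norm_num) (pow_pos hz0 3)
  have hpi : (0:ℝ) < 2 * Real.pi := by positivity
  have hdabs : (0:ℝ) < |Ξ.det| := abs_pos.mpr hdet
  have hA : ((12 / z ^ 3) ^ ((d:ℝ) / 2)) ^ 2 = (12 / z ^ 3) ^ (d:ℝ) := by
    rw [← Real.rpow_natCast ((12 / z ^ 3) ^ ((d:ℝ) / 2)) 2, ← Real.rpow_mul ha.le]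
    norm_num
  have hB : ((2 * Real.pi) ^ (-(d:ℝ) / 2)) ^ 2 = (2 * Real.pi) ^ (-(d:ℝ)) := by
    rw [← Real.rpow_natCast ((2 * Real.pi) ^ (-(d:ℝ) / 2)) 2, ← Real.rpow_mul hpi.le]
    norm_num
  have hC : (|Ξ.det| ^ ((-1:ℝ) / 2)) ^ 2 = |Ξ.det|⁻¹ := by
    rw [← Real.rpow_natCast (|Ξ.det| ^ ((-1:ℝ) / 2)) 2, ← Real.rpow_mul hdabs.le]
    rw [show (-1:ℝ) / 2 * (2:ℕ) = -1 by norm_num]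
    exact Real.rpow_neg_one _
  have hP : (0:ℝ) < (12 / z ^ 3) ^ (d:ℝ) * (2 * Real.pi) ^ (-(d:ℝ)) * |Ξ.det|⁻¹ :=
    mul_pos (mul_pos (Real.rpow_pos_of_pos ha _) (Real.rpow_pos_of_pos hpi _))
      (inv_pos.2 hdabs)
  have h2 : (avgIntensity Ξ J z r) ^ 2
      = ((12 / z ^ 3) ^ (d:ℝ) * (2 * Real.pi) ^ (-(d:ℝ)) * |Ξ.det|⁻¹)
        * (∫ x : Fin d → ℝ,
            Real.exp ((6 / z ^ 3) * ((r - x) ⬝ᵥ Ξ⁻¹.mulVec (r - x))) * J x x) ^ 2 := by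
    rw [avgIntensity, mul_pow, mul_pow, mul_pow, hA, hB, hC]
  have h1 : crossCorr Ξ J z r
      = ((12 / z ^ 3) ^ (d:ℝ) * (2 * Real.pi) ^ (-(d:ℝ)) * |Ξ.det|⁻¹)
        * (∫ q : (Fin d → ℝ) × (Fin d → ℝ),
            Real.exp ((6 / z ^ 3) * (((r - q.1) ⬝ᵥ Ξ⁻¹.mulVec (r - q.1))
              + ((r - q.2) ⬝ᵥ Ξ⁻¹.mulVec (r - q.2)))) * (J q.1 q.2) ^ 2) := by
    rw [crossCorr]
  rw [h1, h2, mul_div_mul_left _ _ hP.ne']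
end

section
/- Let d ≥ 1, let R̂ ∈ L¹(ℝ^d, ℝ), and define R(x) = ∫_{ℝ^d} R̂(k) exp(i k·x) dk/(2π)^d (a bounded continuous function, assumed real-valued). Let g ∈ L¹(ℝ^d, ℂ), λ ∈ ℂ, and b ∈ ℝ^d. Define, for z ≥ 0 and ξ ∈ ℝ^d, ρ(z,ξ) = ∫_{ℝ^d} exp(−i w·ξ) g(w) exp(λ ∫_0^z R(w + s b) ds) dw. Then ρ(0,ξ) = ∫ exp(−iw·ξ)g(w)dw, and for every ξ the map z ↦ ρ(z,ξ) is differentiable with ∂_z ρ(z,ξ) = (λ/(2π)^d) ∫_{ℝ^d} R̂(k) exp(i z k·b) ρ(z, ξ − k) dk. -/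
open MeasureTheory Matrix

/-- The exponential-of-line-integral ansatz
`ρ(z,ξ) = ∫ exp(−iw·ξ) g(w) exp(λ∫₀^z R(w+sb)ds) dw`. -/
noncomputable def rhoSol {d : ℕ} (R : (Fin d → ℝ) → ℝ) (g : (Fin d → ℝ) → ℂ)
    (lam : ℂ) (b : Fin d → ℝ) (z : ℝ) (ξ : Fin d → ℝ) : ℂ :=
  ∫ w : Fin d → ℝ,
    Complex.exp (-Complex.I * ((w ⬝ᵥ ξ : ℝ) : ℂ)) * g w *
      Complex.exp (lam * ((∫ s in (0:ℝ)..z, R (w + s • b) : ℝ) : ℂ))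

section Aux

variable {d : ℕ}

lemma aux_dot_cont_left (x : Fin d → ℝ) : Continuous fun k : Fin d → ℝ => k ⬝ᵥ x :=
  continuous_finset_sum _ fun i _ => (continuous_apply i).mul continuous_const

lemma aux_dot_cont_right (k : Fin d → ℝ) : Continuous fun x : Fin d → ℝ => k ⬝ᵥ x :=
  continuous_finset_sum _ fun i _ => continuous_const.mul (continuous_apply i)

lemma aux_norm_exp_I_mul (c : ℂ) (r : ℝ) (hc : c.re = 0) :
    ‖Complex.exp (c * (r : ℂ))‖ = 1 := by
  rw [Complex.norm_exp]
  simp [Complex.mul_re, hc, Real.exp_zero]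

end Aux

/-- The ansatz `ρ` solves, in the Fourier domain, the pair-interaction evolution equation:
`ρ(0,ξ) = ĝ(ξ)` and `∂_z ρ(z,ξ) = (λ/(2π)^d) ∫ R̂(k) exp(izk·b) ρ(z,ξ−k) dk`. -/
theorem rhoSol_solves (d : ℕ) (hd : 1 ≤ d)
    (Rhat : (Fin d → ℝ) → ℝ) (hRhat : Integrable Rhat)
    (R : (Fin d → ℝ) → ℝ)
    (hR : ∀ x : Fin d → ℝ, (R x : ℂ) = (1 / (2 * Real.pi) ^ d) *
      ∫ k : Fin d → ℝ, (Rhat k : ℂ) * Complex.exp (Complex.I * ((k ⬝ᵥ x : ℝ) : ℂ)))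
    (g : (Fin d → ℝ) → ℂ) (hg : Integrable g) (lam : ℂ) (b : Fin d → ℝ) :
    (∀ ξ : Fin d → ℝ,
      rhoSol R g lam b 0 ξ
        = ∫ w : Fin d → ℝ, Complex.exp (-Complex.I * ((w ⬝ᵥ ξ : ℝ) : ℂ)) * g w)
    ∧ ∀ ξ : Fin d → ℝ, ∀ z : ℝ, 0 ≤ z →
      HasDerivAt (fun z' : ℝ => rhoSol R g lam b z' ξ)
        ((lam / (2 * Real.pi) ^ d) *
          ∫ k : Fin d → ℝ, (Rhat k : ℂ) *
            Complex.exp (Complex.I * z * ((k ⬝ᵥ b : ℝ) : ℂ)) *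
            rhoSol R g lam b z (ξ - k)) z := by
  constructor
  · intro ξ
    unfold rhoSol
    simp only [intervalIntegral.integral_same, Complex.ofReal_zero, mul_zero,
      Complex.exp_zero, mul_one]
  · intro ξ z hz
    clear hz
    -- constants
    set P : ℝ := (2 * Real.pi) ^ d with hPdef
    have hPpos : 0 < P := pow_pos (by positivity) d
    have hPcne : ((2 * (Real.pi : ℂ)) ^ d) ≠ 0 :=
      pow_ne_zero _ (mul_ne_zero two_ne_zero (Complex.ofReal_ne_zero.mpr Real.pi_ne_zero))
    set C : ℝ := (∫ k : Fin d → ℝ, ‖Rhat k‖) / P with hCdef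
    have hC0 : 0 ≤ C := div_nonneg (integral_nonneg fun k => norm_nonneg _) hPpos.le
    -- boundedness of R
    have hnormint : ∀ x : Fin d → ℝ,
        ‖∫ k : Fin d → ℝ, (Rhat k : ℂ) * Complex.exp (Complex.I * ((k ⬝ᵥ x : ℝ) : ℂ))‖
          ≤ ∫ k : Fin d → ℝ, ‖Rhat k‖ := by
      intro x
      refine (norm_integral_le_integral_norm _).trans_eq ?_
      refine integral_congr_ae (Filter.Eventually.of_forall fun k => ?_)
      show ‖_ * _‖ = _
      rw [norm_mul, aux_norm_exp_I_mul _ _ Complex.I_re, mul_one, Complex.norm_real]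
    have hRb : ∀ x, |R x| ≤ C := by
      intro x
      have : |R x| = ‖(R x : ℂ)‖ := by rw [Complex.norm_real, Real.norm_eq_abs]
      rw [this, hR x, norm_mul]
      have h1 : ‖(1 / (2 * (Real.pi : ℂ)) ^ d : ℂ)‖ = 1 / P := by
        rw [norm_div, norm_one, norm_pow]
        norm_num [hPdef, Complex.norm_real, abs_of_pos Real.pi_pos]
      rw [h1, hCdef, div_eq_mul_inv, div_eq_mul_inv, one_mul]
      rw [mul_comm]
      exact mul_le_mul_of_nonneg_right (hnormint x) (by positivity)
    -- continuity of R
    have hIcont : Continuous fun x : Fin d → ℝ =>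
        ∫ k : Fin d → ℝ, (Rhat k : ℂ) * Complex.exp (Complex.I * ((k ⬝ᵥ x : ℝ) : ℂ)) := by
      refine continuous_of_dominated (bound := fun k => ‖Rhat k‖) ?_ ?_ hRhat.norm ?_
      · intro x
        exact (Complex.continuous_ofReal.comp_aestronglyMeasurable hRhat.1).mul
          (Continuous.aestronglyMeasurable (by
            exact Complex.continuous_exp.comp (continuous_const.mul
              (Complex.continuous_ofReal.comp (aux_dot_cont_left x)))))
      · intro x
        refine Filter.Eventually.of_forall fun k => ?_
        rw [norm_mul, aux_norm_exp_I_mul _ _ Complex.I_re, mul_one, Complex.norm_real]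
      · refine Filter.Eventually.of_forall fun k => ?_
        exact continuous_const.mul (Complex.continuous_exp.comp (continuous_const.mul
          (Complex.continuous_ofReal.comp (aux_dot_cont_right k))))
    have hRcont : Continuous R := by
      have : R = fun x => ((1 / (2 * (Real.pi : ℂ)) ^ d : ℂ) *
          ∫ k : Fin d → ℝ, (Rhat k : ℂ) * Complex.exp (Complex.I * ((k ⬝ᵥ x : ℝ) : ℂ))).re := by
        funext x
        rw [← hR x, Complex.ofReal_re]
      rw [this]
      exact Complex.continuous_re.comp (continuous_const.mul hIcont)
    -- line integral facts
    have hscont : ∀ w : Fin d → ℝ, Continuous fun s : ℝ => R (w + s • b) :=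
      fun w => hRcont.comp (by fun_prop)
    have hFzd : ∀ (w : Fin d → ℝ) (z' : ℝ),
        HasDerivAt (fun t => ∫ s in (0:ℝ)..t, R (w + s • b)) (R (w + z' • b)) z' := by
      intro w z'
      exact intervalIntegral.integral_hasDerivAt_right
        ((hscont w).intervalIntegrable _ _)
        ((hscont w).stronglyMeasurableAtFilter _ _) (hscont w).continuousAt
    have hFzb : ∀ (w : Fin d → ℝ) (z' : ℝ), |∫ s in (0:ℝ)..z', R (w + s • b)| ≤ C * |z'| := by
      intro w z'
      have := intervalIntegral.norm_integral_le_of_norm_le_const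
        (C := C) (f := fun s => R (w + s • b)) (a := 0) (b := z')
        (fun s _ => by simpa using hRb (w + s • b))
      simpa using this
    have hFzcontw : ∀ z' : ℝ, Continuous fun w : Fin d → ℝ => ∫ s in (0:ℝ)..z', R (w + s • b) := by
      intro z'
      exact intervalIntegral.continuous_parametric_intervalIntegral_of_continuous'
        (f := fun (w : Fin d → ℝ) (s : ℝ) => R (w + s • b))
        (hRcont.comp (by fun_prop)) 0 z'
    -- the exponential factor
    set E : (Fin d → ℝ) → ℝ → ℂ := fun w t =>
      Complex.exp (lam * ((∫ s in (0:ℝ)..t, R (w + s • b) : ℝ) : ℂ)) with hEdef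
    have hEnorm : ∀ w t, ‖E w t‖ ≤ Real.exp (‖lam‖ * (C * |t|)) := by
      intro w t
      rw [hEdef]
      simp only
      rw [Complex.norm_exp]
      apply Real.exp_le_exp.mpr
      calc (lam * ((∫ s in (0:ℝ)..t, R (w + s • b) : ℝ) : ℂ)).re
          ≤ |(lam * ((∫ s in (0:ℝ)..t, R (w + s • b) : ℝ) : ℂ)).re| := le_abs_self _
        _ ≤ ‖(lam * ((∫ s in (0:ℝ)..t, R (w + s • b) : ℝ) : ℂ))‖ :=
            Complex.abs_re_le_norm _
        _ = ‖lam‖ * |∫ s in (0:ℝ)..t, R (w + s • b)| := by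
            rw [norm_mul, Complex.norm_real, Real.norm_eq_abs]
        _ ≤ ‖lam‖ * (C * |t|) := mul_le_mul_of_nonneg_left (hFzb w t) (norm_nonneg _)
    have hEd : ∀ w t, HasDerivAt (E w) (E w t * (lam * R (w + t • b))) t := fun w t =>
      ((hFzd w t).ofReal_comp.const_mul lam).cexp
    have hEcont : ∀ t, Continuous fun w => E w t := fun t =>
      Complex.continuous_exp.comp (continuous_const.mul
        (Complex.continuous_ofReal.comp (hFzcontw t)))
    set M : ℝ := Real.exp (‖lam‖ * (C * (|z| + 1))) with hMdef
    have hEnorm' : ∀ w, ∀ t ∈ Metric.ball z 1, ‖E w t‖ ≤ M := by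
      intro w t ht
      refine (hEnorm w t).trans (Real.exp_le_exp.mpr ?_)
      have h1 : |t| ≤ |z| + 1 := by
        have h2 : |t - z| < 1 := by rw [← Real.dist_eq]; exact Metric.mem_ball.mp ht
        calc |t| = |t - z + z| := by ring_nf
          _ ≤ |t - z| + |z| := abs_add_le _ _
          _ ≤ |z| + 1 := by linarith
      exact mul_le_mul_of_nonneg_left (mul_le_mul_of_nonneg_left h1 hC0) (norm_nonneg lam)
    have hEz : ∀ w, ‖E w z‖ ≤ M := fun w => hEnorm' w z (Metric.mem_ball_self one_pos)
    -- the integrands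
    set F : ℝ → (Fin d → ℝ) → ℂ := fun t w =>
      Complex.exp (-Complex.I * ((w ⬝ᵥ ξ : ℝ) : ℂ)) * g w * E w t with hFdef
    set F' : ℝ → (Fin d → ℝ) → ℂ := fun t w =>
      Complex.exp (-Complex.I * ((w ⬝ᵥ ξ : ℝ) : ℂ)) * g w *
        (E w t * (lam * R (w + t • b))) with hF'def
    have hexpcont : Continuous fun w : Fin d → ℝ =>
        Complex.exp (-Complex.I * ((w ⬝ᵥ ξ : ℝ) : ℂ)) :=
      Complex.continuous_exp.comp (continuous_const.mul
        (Complex.continuous_ofReal.comp (aux_dot_cont_left ξ)))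
    have hFmeas : ∀ t, AEStronglyMeasurable (F t) volume := fun t =>
      (hexpcont.aestronglyMeasurable.mul hg.1).mul (hEcont t).aestronglyMeasurable
    have hnegIre : (-Complex.I).re = 0 := by simp
    have hnormF : ∀ t w, ‖F t w‖ = ‖g w‖ * ‖E w t‖ := by
      intro t w
      rw [hFdef]
      simp only
      rw [norm_mul, norm_mul, aux_norm_exp_I_mul _ _ hnegIre, one_mul]
    have hFint : Integrable (F z) volume := by
      refine (hg.norm.mul_const M).mono' (hFmeas z)
        (Filter.Eventually.of_forall fun w => ?_)
      rw [hnormF]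
      exact mul_le_mul_of_nonneg_left (hEz w) (norm_nonneg _)
    have hF'meas : AEStronglyMeasurable (F' z) volume := by
      refine (hexpcont.aestronglyMeasurable.mul hg.1).mul
        (Continuous.aestronglyMeasurable ?_)
      exact (hEcont z).mul (continuous_const.mul
        (Complex.continuous_ofReal.comp (hRcont.comp (by fun_prop))))
    have hbound : ∀ w : Fin d → ℝ, ∀ t ∈ Metric.ball z 1,
        ‖F' t w‖ ≤ ‖g w‖ * (M * (‖lam‖ * C)) := by
      intro w t ht
      rw [hF'def]
      simp only
      rw [norm_mul, norm_mul, aux_norm_exp_I_mul _ _ hnegIre, one_mul, norm_mul,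
        norm_mul, Complex.norm_real, Real.norm_eq_abs]
      have hE := hEnorm' w t ht
      have hRb' := hRb (w + t • b)
      have h0 : (0:ℝ) ≤ ‖g w‖ := norm_nonneg _
      gcongr
    have hdiff : ∀ w : Fin d → ℝ, ∀ t : ℝ, HasDerivAt (fun t' => F t' w) (F' t w) t := by
      intro w t
      have h := (hEd w t).const_mul
        (Complex.exp (-Complex.I * ((w ⬝ᵥ ξ : ℝ) : ℂ)) * g w)
      simpa only [hFdef, hF'def, mul_assoc] using h
    have hmain := hasDerivAt_integral_of_dominated_loc_of_deriv_le
      (μ := volume) (F := F) (F' := F') (x₀ := z)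
      (bound := fun w => ‖g w‖ * (M * (‖lam‖ * C)))
      (Metric.ball_mem_nhds z one_pos) (Filter.Eventually.of_forall hFmeas) hFint hF'meas
      (Filter.Eventually.of_forall fun w => hbound w)
      (hg.norm.mul_const _)
      (Filter.Eventually.of_forall fun w t ht => hdiff w t)
    -- identify the derivative with the right-hand side
    have hExp : ∀ (k w : Fin d → ℝ),
        Complex.exp (Complex.I * z * ((k ⬝ᵥ b : ℝ) : ℂ)) *
          Complex.exp (-Complex.I * ((w ⬝ᵥ (ξ - k) : ℝ) : ℂ))
        = Complex.exp (-Complex.I * ((w ⬝ᵥ ξ : ℝ) : ℂ)) *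
          Complex.exp (Complex.I * ((k ⬝ᵥ (w + z • b) : ℝ) : ℂ)) := by
      intro k w
      rw [← Complex.exp_add, ← Complex.exp_add]
      congr 1
      have h1 : w ⬝ᵥ (ξ - k) = w ⬝ᵥ ξ - k ⬝ᵥ w := by
        rw [dotProduct_sub, dotProduct_comm w k]
      have h2 : k ⬝ᵥ (w + z • b) = k ⬝ᵥ w + z * (k ⬝ᵥ b) := by
        rw [dotProduct_add, dotProduct_smul, smul_eq_mul]
      rw [h1, h2]
      push_cast
      ring
    have hinner : ∀ x : Fin d → ℝ,
        (∫ k : Fin d → ℝ, (Rhat k : ℂ) * Complex.exp (Complex.I * ((k ⬝ᵥ x : ℝ) : ℂ)))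
          = (2 * (Real.pi : ℂ)) ^ d * (R x : ℂ) := by
      intro x
      rw [hR x, ← mul_assoc, mul_one_div, div_self hPcne, one_mul]
    set Φ : (Fin d → ℝ) × (Fin d → ℝ) → ℂ := fun p =>
      (Rhat p.1 : ℂ) * Complex.exp (Complex.I * z * ((p.1 ⬝ᵥ b : ℝ) : ℂ)) *
        (Complex.exp (-Complex.I * ((p.2 ⬝ᵥ (ξ - p.1) : ℝ) : ℂ)) * g p.2 * E p.2 z)
      with hΦdef
    have hIzre : (Complex.I * (z:ℂ)).re = 0 := by simp [Complex.mul_re]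
    have hΦmeas : AEStronglyMeasurable Φ (volume.prod volume) := by
      refine AEStronglyMeasurable.mul (AEStronglyMeasurable.mul ?_ ?_)
        (AEStronglyMeasurable.mul (AEStronglyMeasurable.mul ?_ ?_) ?_)
      · exact (Complex.continuous_ofReal.comp_aestronglyMeasurable hRhat.1).comp_fst
      · exact Continuous.aestronglyMeasurable
          (Complex.continuous_exp.comp (continuous_const.mul
            (Complex.continuous_ofReal.comp ((aux_dot_cont_left b).comp continuous_fst))))
      · refine Continuous.aestronglyMeasurable
          (Complex.continuous_exp.comp (continuous_const.mul
            (Complex.continuous_ofReal.comp ?_)))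
        exact continuous_finset_sum _ fun i _ =>
          ((continuous_apply i).comp continuous_snd).mul
            (continuous_const.sub ((continuous_apply i).comp continuous_fst))
      · exact hg.1.comp_snd
      · exact ((hEcont z).comp continuous_snd).aestronglyMeasurable
    have hΦint : Integrable Φ (volume.prod volume) := by
      refine (hRhat.norm.mul_prod (hg.norm.mul_const M)).mono' hΦmeas
        (Filter.Eventually.of_forall fun p => ?_)
      rw [hΦdef]
      simp only
      rw [norm_mul, norm_mul, norm_mul, norm_mul,
        aux_norm_exp_I_mul _ _ hIzre, aux_norm_exp_I_mul _ _ hnegIre,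
        mul_one, one_mul, Complex.norm_real]
      have := hEz p.2
      have h0 : (0:ℝ) ≤ ‖Rhat p.1‖ := norm_nonneg _
      calc ‖Rhat p.1‖ * (‖g p.2‖ * ‖E p.2 z‖)
          ≤ ‖Rhat p.1‖ * (‖g p.2‖ * M) :=
            mul_le_mul_of_nonneg_left
              (mul_le_mul_of_nonneg_left this (norm_nonneg _)) h0
        _ = ‖Rhat p.1‖ * (‖g p.2‖ * M) := rfl
    have hswap : (∫ k : Fin d → ℝ, ∫ w : Fin d → ℝ, Φ (k, w))
        = ∫ w : Fin d → ℝ, ∫ k : Fin d → ℝ, Φ (k, w) :=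
      integral_integral_swap hΦint
    have hinner2 : ∀ w : Fin d → ℝ, (∫ k : Fin d → ℝ, Φ (k, w)) =
        (Complex.exp (-Complex.I * ((w ⬝ᵥ ξ : ℝ) : ℂ)) * g w * E w z) *
          ((2 * (Real.pi : ℂ)) ^ d * (R (w + z • b) : ℂ)) := by
      intro w
      have hpt : ∀ k : Fin d → ℝ, Φ (k, w) =
          (Complex.exp (-Complex.I * ((w ⬝ᵥ ξ : ℝ) : ℂ)) * g w * E w z) *
            ((Rhat k : ℂ) * Complex.exp (Complex.I * ((k ⬝ᵥ (w + z • b) : ℝ) : ℂ))) := by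
        intro k
        rw [hΦdef]
        simp only
        linear_combination ((Rhat k : ℂ) * g w * E w z) * hExp k w
      rw [integral_congr_ae (Filter.Eventually.of_forall hpt), integral_const_mul,
        hinner (w + z • b)]
    have hρeq : ∀ k : Fin d → ℝ,
        (Rhat k : ℂ) * Complex.exp (Complex.I * z * ((k ⬝ᵥ b : ℝ) : ℂ)) *
          rhoSol R g lam b z (ξ - k) = ∫ w : Fin d → ℝ, Φ (k, w) := by
      intro k
      have : rhoSol R g lam b z (ξ - k) = ∫ w : Fin d → ℝ,
          Complex.exp (-Complex.I * ((w ⬝ᵥ (ξ - k) : ℝ) : ℂ)) * g w * E w z := rfl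
      rw [this, ← integral_const_mul]
    have hfinal : (∫ w : Fin d → ℝ, F' z w) = (lam / (2 * Real.pi) ^ d) *
        ∫ k : Fin d → ℝ, (Rhat k : ℂ) *
          Complex.exp (Complex.I * z * ((k ⬝ᵥ b : ℝ) : ℂ)) *
          rhoSol R g lam b z (ξ - k) := by
      have hpt2 : ∀ w : Fin d → ℝ, F' z w = (lam / (2 * (Real.pi : ℂ)) ^ d) *
          ((Complex.exp (-Complex.I * ((w ⬝ᵥ ξ : ℝ) : ℂ)) * g w * E w z) *
            ((2 * (Real.pi : ℂ)) ^ d * (R (w + z • b) : ℂ))) := by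
        intro w
        rw [hF'def]
        simp only
        field_simp
      calc (∫ w : Fin d → ℝ, F' z w)
          = ∫ w : Fin d → ℝ, (lam / (2 * (Real.pi : ℂ)) ^ d) *
              ((Complex.exp (-Complex.I * ((w ⬝ᵥ ξ : ℝ) : ℂ)) * g w * E w z) *
                ((2 * (Real.pi : ℂ)) ^ d * (R (w + z • b) : ℂ))) :=
            integral_congr_ae (Filter.Eventually.of_forall hpt2)
        _ = (lam / (2 * (Real.pi : ℂ)) ^ d) * ∫ w : Fin d → ℝ,
              ((Complex.exp (-Complex.I * ((w ⬝ᵥ ξ : ℝ) : ℂ)) * g w * E w z) *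
                ((2 * (Real.pi : ℂ)) ^ d * (R (w + z • b) : ℂ))) := integral_const_mul _ _
        _ = (lam / (2 * (Real.pi : ℂ)) ^ d) * ∫ w : Fin d → ℝ,
              ∫ k : Fin d → ℝ, Φ (k, w) := by
            rw [integral_congr_ae (Filter.Eventually.of_forall fun w => (hinner2 w).symm)]
        _ = (lam / (2 * (Real.pi : ℂ)) ^ d) * ∫ k : Fin d → ℝ,
              ∫ w : Fin d → ℝ, Φ (k, w) := by rw [hswap]
        _ = (lam / (2 * Real.pi) ^ d) * ∫ k : Fin d → ℝ, (Rhat k : ℂ) *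
              Complex.exp (Complex.I * z * ((k ⬝ᵥ b : ℝ) : ℂ)) *
              rhoSol R g lam b z (ξ - k) := by
            rw [integral_congr_ae (Filter.Eventually.of_forall fun k => (hρeq k).symm)]
    have hshow : (fun t : ℝ => rhoSol R g lam b t ξ) = fun t => ∫ w : Fin d → ℝ, F t w := rfl
    rw [hshow, ← hfinal]
    exact hmain.2
end

section
/- Let d ≥ 1, z > 0, k₀ > 0, θ ∈ (0,1], and β > 1. Let Q : ℝ^d → ℝ be continuous with Q(x) ≤ 0 for all x, and let Γ̂ ∈ L¹(ℝ^{2d}, ℂ). Then for all r, x, y ∈ ℝ^d, lim_{ε→0⁺} ∫_{ℝ^{2d}} Γ̂(ζ,ξ) exp(i r·ζ) exp(i ε^β ξ·(x−y)/θ) exp(i ε^β ζ·(x+y)/2) exp(−i z ε^{2β−1} ξ·ζ/(k₀θ)) exp( (k₀²z/4) ∫_0^1 Q(y − x + (ε^{β−1} s z/k₀) ζ) ds ) dξ dζ/(2π)^{2d} = Γ(r,0) · exp((k₀²z/4) Q(y − x)), where Γ(r,0) := ∫_{ℝ^{2d}} Γ̂(ζ,ξ) exp(i r·ζ) dξ dζ/(2π)^{2d}.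 -/
open MeasureTheory Filter Matrix

set_option maxHeartbeats 1000000

private lemma norm_exp_I_mul_ofReal (t : ℝ) :
    ‖Complex.exp (Complex.I * (t : ℂ))‖ = 1 := by
  rw [Complex.norm_exp]
  simp

private lemma norm_exp_neg_I_mul_ofReal (t : ℝ) :
    ‖Complex.exp (-Complex.I * (t : ℂ))‖ = 1 := by
  rw [Complex.norm_exp]
  simp

private lemma tendsto_rpow_zero {p : ℝ} (hp : 0 < p) :
    Tendsto (fun ε : ℝ => ε ^ p) (nhdsWithin 0 (Set.Ioi 0)) (nhds 0) := by
  have h := (Real.continuousAt_rpow_const 0 p (Or.inr hp.le)).tendsto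
  rw [Real.zero_rpow hp.ne'] at h
  exact h.mono_left nhdsWithin_le_nhds

private lemma continuous_dotProduct_const {d : ℕ} (c : Fin d → ℝ) :
    Continuous fun v : Fin d → ℝ => v ⬝ᵥ c := by
  simp only [dotProduct]
  exact continuous_finset_sum _ fun i _ => (continuous_apply i).mul continuous_const

private lemma tendsto_exp_comp {l : Filter ℝ} {g : ℝ → ℝ} {a : ℝ} (w : ℂ)
    (hg : Tendsto g l (nhds a)) :
    Tendsto (fun ε => Complex.exp (w * ((g ε : ℝ) : ℂ))) l
      (nhds (Complex.exp (w * (a : ℂ)))) :=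
  (Complex.continuous_exp.tendsto _).comp
    (((continuous_const.mul Complex.continuous_ofReal).tendsto a).comp hg)

/-- Kinetic-regime (`η = 1`) limit of the rescaled second moment of the wave field for a
broad partially coherent source with `β > 1`: the limit is `Γ(r,0) exp((k₀²z/4)Q(y−x))`. -/
theorem kinetic_second_moment_limit (d : ℕ) (hd : 1 ≤ d)
    (z k₀ θ β : ℝ) (hz : 0 < z) (hk : 0 < k₀) (hθ : 0 < θ) (hθ1 : θ ≤ 1) (hβ : 1 < β)
    (Q : (Fin d → ℝ) → ℝ) (hQc : Continuous Q) (hQ : ∀ x, Q x ≤ 0)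
    (Γhat : (Fin d → ℝ) × (Fin d → ℝ) → ℂ) (hΓ : Integrable Γhat)
    (r x y : Fin d → ℝ) :
    Tendsto (fun ε : ℝ =>
        (1 / (2 * Real.pi) ^ (2 * d)) *
          ∫ q : (Fin d → ℝ) × (Fin d → ℝ),
            Γhat q * Complex.exp (Complex.I * ((q.1 ⬝ᵥ r : ℝ) : ℂ)) *
            Complex.exp (Complex.I * ((ε ^ β * (q.2 ⬝ᵥ (x - y)) / θ : ℝ) : ℂ)) *
            Complex.exp (Complex.I * ((ε ^ β * (q.1 ⬝ᵥ (x + y)) / 2 : ℝ) : ℂ)) *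
            Complex.exp (-Complex.I *
              ((z * ε ^ (2 * β - 1) * (q.2 ⬝ᵥ q.1) / (k₀ * θ) : ℝ) : ℂ)) *
            Complex.exp ((((k₀ ^ 2 * z / 4) *
              ∫ s in (0:ℝ)..1, Q (y - x + (ε ^ (β - 1) * s * z / k₀) • q.1) : ℝ) : ℂ)))
      (nhdsWithin 0 (Set.Ioi 0))
      (nhds (((1 / (2 * Real.pi) ^ (2 * d)) *
          ∫ q : (Fin d → ℝ) × (Fin d → ℝ),
            Γhat q * Complex.exp (Complex.I * ((q.1 ⬝ᵥ r : ℝ) : ℂ))) *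
        Complex.exp (((k₀ ^ 2 * z / 4 * Q (y - x) : ℝ) : ℂ)))) := by
  set l := nhdsWithin (0:ℝ) (Set.Ioi 0)
  set C : ℂ := (((k₀ ^ 2 * z / 4 * Q (y - x) : ℝ)) : ℂ) with hC
  -- the parametric interval integral
  set G : ℝ × (Fin d → ℝ) → ℝ :=
    fun p => ∫ s in (0:ℝ)..1, Q (y - x + (p.1 * s * z / k₀) • p.2) with hGdef
  have hGc : Continuous G := by
    apply intervalIntegral.continuous_parametric_intervalIntegral_of_continuous'
    exact hQc.comp (continuous_const.add
      (((((continuous_fst.comp continuous_fst).mul continuous_snd).mul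
        continuous_const).div_const k₀).smul (continuous_snd.comp continuous_fst)))
  have hG0 : ∀ v : Fin d → ℝ, G (0, v) = Q (y - x) := by
    intro v
    simp [hGdef]
  -- continuity of the dot products
  have hd1 : Continuous fun q : (Fin d → ℝ) × (Fin d → ℝ) => q.1 ⬝ᵥ r :=
    (continuous_dotProduct_const r).comp continuous_fst
  have hd2 : Continuous fun q : (Fin d → ℝ) × (Fin d → ℝ) => q.2 ⬝ᵥ (x - y) :=
    (continuous_dotProduct_const (x - y)).comp continuous_snd
  have hd3 : Continuous fun q : (Fin d → ℝ) × (Fin d → ℝ) => q.1 ⬝ᵥ (x + y) :=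
    (continuous_dotProduct_const (x + y)).comp continuous_fst
  have hd4 : Continuous fun q : (Fin d → ℝ) × (Fin d → ℝ) => q.2 ⬝ᵥ q.1 := by
    simp only [dotProduct]
    exact continuous_finset_sum _ fun i _ =>
      ((continuous_apply i).comp continuous_snd).mul ((continuous_apply i).comp continuous_fst)
  have hexpc : ∀ {g : (Fin d → ℝ) × (Fin d → ℝ) → ℝ} (w : ℂ), Continuous g →
      Continuous fun q => Complex.exp (w * ((g q : ℝ) : ℂ)) := fun w hg =>
    Complex.continuous_exp.comp (continuous_const.mul (Complex.continuous_ofReal.comp hg))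
  -- nonpositivity of the exponent
  have hint_nonpos : ∀ (a : ℝ) (v : Fin d → ℝ), G (a, v) ≤ 0 := by
    intro a v
    have h0 : (0:ℝ) ≤ ∫ s in (0:ℝ)..1, -(Q (y - x + (a * s * z / k₀) • v)) :=
      intervalIntegral.integral_nonneg (by norm_num)
        (fun u _ => neg_nonneg.2 (hQ _))
    rw [intervalIntegral.integral_neg] at h0
    simpa [hGdef] using h0
  have hexps : ∀ (a : ℝ) (v : Fin d → ℝ),
      ‖Complex.exp (((k₀ ^ 2 * z / 4 * G (a, v) : ℝ) : ℂ))‖ ≤ 1 := by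
    intro a v
    rw [Complex.norm_exp]
    simp only [Complex.ofReal_re]
    apply Real.exp_le_one_iff.mpr
    have h1 : G (a, v) ≤ 0 := hint_nonpos a v
    have h2 : (0:ℝ) ≤ k₀ ^ 2 * z / 4 := by positivity
    exact mul_nonpos_of_nonneg_of_nonpos h2 h1
  -- dominated convergence
  have hβ1 : (0:ℝ) < β - 1 := by linarith
  have hβ2 : (0:ℝ) < 2 * β - 1 := by linarith
  have hβ0 : (0:ℝ) < β := by linarith
  have key : Tendsto (fun ε : ℝ =>
      ∫ q : (Fin d → ℝ) × (Fin d → ℝ),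
        Γhat q * Complex.exp (Complex.I * ((q.1 ⬝ᵥ r : ℝ) : ℂ)) *
        Complex.exp (Complex.I * ((ε ^ β * (q.2 ⬝ᵥ (x - y)) / θ : ℝ) : ℂ)) *
        Complex.exp (Complex.I * ((ε ^ β * (q.1 ⬝ᵥ (x + y)) / 2 : ℝ) : ℂ)) *
        Complex.exp (-Complex.I *
          ((z * ε ^ (2 * β - 1) * (q.2 ⬝ᵥ q.1) / (k₀ * θ) : ℝ) : ℂ)) *
        Complex.exp ((((k₀ ^ 2 * z / 4) *
          ∫ s in (0:ℝ)..1, Q (y - x + (ε ^ (β - 1) * s * z / k₀) • q.1) : ℝ) : ℂ))) l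
      (nhds (∫ q : (Fin d → ℝ) × (Fin d → ℝ),
        Γhat q * Complex.exp (Complex.I * ((q.1 ⬝ᵥ r : ℝ) : ℂ)) * Complex.exp C)) := by
    apply tendsto_integral_filter_of_dominated_convergence (fun q => ‖Γhat q‖)
    · filter_upwards with ε
      refine ((((hΓ.1.mul ?_).mul ?_).mul ?_).mul ?_).mul ?_
      · exact (hexpc Complex.I hd1).aestronglyMeasurable
      · exact (hexpc Complex.I ((((continuous_const.mul hd2).div_const θ)))).aestronglyMeasurable
      · exact (hexpc Complex.I (((continuous_const.mul hd3).div_const 2))).aestronglyMeasurable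
      · exact (hexpc (-Complex.I)
          (((continuous_const.mul hd4).div_const (k₀ * θ)))).aestronglyMeasurable
      · refine (Complex.continuous_exp.comp
          (Complex.continuous_ofReal.comp (continuous_const.mul ?_))).aestronglyMeasurable
        exact hGc.comp (continuous_const.prodMk continuous_fst)
    · filter_upwards with ε
      filter_upwards with q
      rw [norm_mul, norm_mul, norm_mul, norm_mul, norm_mul,
        norm_exp_I_mul_ofReal, norm_exp_I_mul_ofReal, norm_exp_I_mul_ofReal,
        norm_exp_neg_I_mul_ofReal]
      have := hexps (ε ^ (β - 1)) q.1
      have hn : (0:ℝ) ≤ ‖Γhat q‖ := norm_nonneg _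
      calc ‖Γhat q‖ * 1 * 1 * 1 * 1 *
            ‖Complex.exp ((((k₀ ^ 2 * z / 4) *
              ∫ s in (0:ℝ)..1, Q (y - x + (ε ^ (β - 1) * s * z / k₀) • q.1) : ℝ) : ℂ))‖
          = ‖Γhat q‖ * ‖Complex.exp (((k₀ ^ 2 * z / 4 * G (ε ^ (β - 1), q.1) : ℝ) : ℂ))‖ := by
            simp only [hGdef, mul_one]
        _ ≤ ‖Γhat q‖ * 1 := by
            exact mul_le_mul_of_nonneg_left this hn
        _ = ‖Γhat q‖ := mul_one _
    · exact hΓ.norm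
    · filter_upwards with q
      have t1 : Tendsto (fun ε : ℝ => ε ^ β) l (nhds 0) := tendsto_rpow_zero hβ0
      have t2 : Tendsto (fun ε : ℝ => ε ^ (2 * β - 1)) l (nhds 0) := tendsto_rpow_zero hβ2
      have t3 : Tendsto (fun ε : ℝ => ε ^ (β - 1)) l (nhds 0) := tendsto_rpow_zero hβ1
      have e2 : Tendsto (fun ε : ℝ =>
          Complex.exp (Complex.I * ((ε ^ β * (q.2 ⬝ᵥ (x - y)) / θ : ℝ) : ℂ))) l
          (nhds 1) := by
        have := tendsto_exp_comp (g := fun ε : ℝ => ε ^ β * (q.2 ⬝ᵥ (x - y)) / θ)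
          Complex.I ((t1.mul_const _).div_const θ)
        rw [show (0:ℝ) * q.2 ⬝ᵥ (x - y) / θ = 0 by ring] at this
        rwa [Complex.ofReal_zero, mul_zero, Complex.exp_zero] at this
      have e3 : Tendsto (fun ε : ℝ =>
          Complex.exp (Complex.I * ((ε ^ β * (q.1 ⬝ᵥ (x + y)) / 2 : ℝ) : ℂ))) l
          (nhds 1) := by
        have := tendsto_exp_comp (g := fun ε : ℝ => ε ^ β * (q.1 ⬝ᵥ (x + y)) / 2)
          Complex.I ((t1.mul_const _).div_const 2)
        rw [show (0:ℝ) * q.1 ⬝ᵥ (x + y) / 2 = 0 by ring] at this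
        rwa [Complex.ofReal_zero, mul_zero, Complex.exp_zero] at this
      have e4 : Tendsto (fun ε : ℝ =>
          Complex.exp (-Complex.I *
            ((z * ε ^ (2 * β - 1) * (q.2 ⬝ᵥ q.1) / (k₀ * θ) : ℝ) : ℂ))) l
          (nhds 1) := by
        have h0 : Tendsto (fun ε : ℝ => z * ε ^ (2 * β - 1) * (q.2 ⬝ᵥ q.1) / (k₀ * θ)) l
            (nhds 0) := by
          have := ((t2.const_mul z).mul_const (q.2 ⬝ᵥ q.1)).div_const (k₀ * θ)
          simpa using this
        have h := tendsto_exp_comp (-Complex.I) h0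
        rw [Complex.ofReal_zero, mul_zero, Complex.exp_zero] at h
        exact h
      have e5 : Tendsto (fun ε : ℝ =>
          Complex.exp ((((k₀ ^ 2 * z / 4) *
            ∫ s in (0:ℝ)..1, Q (y - x + (ε ^ (β - 1) * s * z / k₀) • q.1) : ℝ) : ℂ))) l
          (nhds (Complex.exp C)) := by
        have hGt : Tendsto (fun ε : ℝ => G (ε ^ (β - 1), q.1)) l (nhds (Q (y - x))) := by
          have : Tendsto (fun ε : ℝ => ((ε ^ (β - 1) : ℝ), q.1)) l (nhds ((0:ℝ), q.1)) :=
            t3.prodMk_nhds tendsto_const_nhds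
          have := (hGc.continuousAt.tendsto).comp this
          rwa [hG0 q.1] at this
        have hin : Tendsto (fun ε : ℝ => k₀ ^ 2 * z / 4 * G (ε ^ (β - 1), q.1)) l
            (nhds (k₀ ^ 2 * z / 4 * Q (y - x))) := hGt.const_mul _
        exact (Complex.continuous_exp.tendsto _).comp
          ((Complex.continuous_ofReal.tendsto _).comp hin)
      have h := ((((tendsto_const_nhds
          (x := Γhat q * Complex.exp (Complex.I * ((q.1 ⬝ᵥ r : ℝ) : ℂ)))
          (f := l)).mul e2).mul e3).mul e4).mul e5
      rw [mul_one, mul_one, mul_one] at h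
      exact h
  have hrw : (∫ q : (Fin d → ℝ) × (Fin d → ℝ),
      Γhat q * Complex.exp (Complex.I * ((q.1 ⬝ᵥ r : ℝ) : ℂ)) * Complex.exp C) =
      (∫ q : (Fin d → ℝ) × (Fin d → ℝ),
        Γhat q * Complex.exp (Complex.I * ((q.1 ⬝ᵥ r : ℝ) : ℂ))) * Complex.exp C :=
    integral_mul_const (Complex.exp C) _
  rw [hrw] at key
  have := key.const_mul ((1 : ℂ) / (2 * Real.pi) ^ (2 * d))
  rw [show ((1 : ℂ) / (2 * Real.pi) ^ (2 * d)) *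
      ((∫ q : (Fin d → ℝ) × (Fin d → ℝ),
        Γhat q * Complex.exp (Complex.I * ((q.1 ⬝ᵥ r : ℝ) : ℂ))) * Complex.exp C) =
      (((1 : ℂ) / (2 * Real.pi) ^ (2 * d)) *
        ∫ q : (Fin d → ℝ) × (Fin d → ℝ),
          Γhat q * Complex.exp (Complex.I * ((q.1 ⬝ᵥ r : ℝ) : ℂ))) * Complex.exp C from
    (mul_assoc _ _ _).symm] at this
  exact this
end
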